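/- arXiv:1211.4927 — 7 statements merged into one kernel-verified Lean document; each statement's English description precedes it below -/
import Mathlib

section
/- Let A, B be distinct points and Z a circle such that segment AB does not intersect Z and A, B lie outside Z. If P* is a point maximizing the angle ∠AP*B over all points at distance at most r from the center of Z (where r is the radius of Z), then P* lies on the boundary of Z. -/
open EuclideanGeometry Real

abbrev Pt := EuclideanSpace ℝ (Fin 2)

/-- Unsigned angle is unchanged when replacing one side by a point on the same ray. -/
lemma angle_left_congr {X Y Z A : Pt} (hY : Y ≠ X) (hZ : Z ≠ X)
    (h : SameRay ℝ (Y -ᵥ X) (Z -ᵥ X)) : ∠ Y X A = ∠ Z X A := by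
  obtain ⟨r₁, r₂, h₁, h₂, he⟩ := h.exists_pos (vsub_ne_zero.2 hY) (vsub_ne_zero.2 hZ)
  unfold EuclideanGeometry.angle
  rw [← InnerProductGeometry.angle_smul_left_of_pos _ _ h₁, he,
    InnerProductGeometry.angle_smul_left_of_pos _ _ h₂]

/-- Exterior angle: moving from `Ps` towards `M` the angle to `A` grows by `∠ Ps A Q`. -/
lemma angle_ext {Ps Q M A : Pt} (hQ : Sbtw ℝ Ps Q M) (hAQ : A ≠ Q) (hAP : A ≠ Ps) :
    ∠ A Q M = ∠ A Ps M + ∠ Ps A Q := by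
  have T := EuclideanGeometry.angle_add_angle_add_angle_eq_pi (p₁ := A) (p₂ := Q) Ps
    hAQ.symm
  have L := EuclideanGeometry.angle_add_angle_eq_pi_of_angle_eq_pi A hQ.angle₁₂₃_eq_pi
  have R : ∠ Q Ps A = ∠ M Ps A :=
    angle_left_congr hQ.ne_left hQ.left_ne_right.symm hQ.wbtw.sameRay_vsub_left
  have C : ∠ A Ps M = ∠ M Ps A := EuclideanGeometry.angle_comm _ _ _
  linarith

/-- Splitting an angle at a point strictly between the two endpoints. -/
lemma angle_split {A B M X : Pt} (hM : Sbtw ℝ A M B)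
    (hncol : ¬Collinear ℝ ({A, X, B} : Set Pt)) :
    ∠ A X B = ∠ A X M + ∠ M X B := by
  have hXA : X ≠ A := by
    rintro rfl
    exact hncol ((collinear_pair ℝ X B).subset (by intro p hp; simp at hp ⊢; tauto))
  have hXB : X ≠ B := by
    rintro rfl
    exact hncol ((collinear_pair ℝ A X).subset (by intro p hp; simp at hp ⊢; tauto))
  have hMA : M ≠ A := hM.ne_left
  have hMB : M ≠ B := hM.ne_right
  have hBA : B ≠ A := hM.left_ne_right.symm
  have T1 : ∠ A X M + ∠ X M A + ∠ M A X = π :=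
    EuclideanGeometry.angle_add_angle_add_angle_eq_pi M hXA
  have T2 : ∠ B X M + ∠ X M B + ∠ M B X = π :=
    EuclideanGeometry.angle_add_angle_add_angle_eq_pi M hXB
  have T3 : ∠ A X B + ∠ X B A + ∠ B A X = π :=
    EuclideanGeometry.angle_add_angle_add_angle_eq_pi B hXA
  have L : ∠ X M A + ∠ X M B = π :=
    EuclideanGeometry.angle_add_angle_eq_pi_of_angle_eq_pi X hM.angle₁₂₃_eq_pi
  have R1 : ∠ M A X = ∠ B A X := angle_left_congr hMA hBA hM.wbtw.sameRay_vsub_left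
  have R2 : ∠ M B X = ∠ A B X := angle_left_congr hMB hBA.symm hM.symm.wbtw.sameRay_vsub_left
  have C1 : ∠ X B A = ∠ A B X := EuclideanGeometry.angle_comm _ _ _
  have C2 : ∠ M X B = ∠ B X M := EuclideanGeometry.angle_comm _ _ _
  linarith

/-- In the plane, a closed ball of positive radius contains a point not collinear
with two given distinct points. -/
lemma exists_good (A B P : Pt) (r : ℝ) (hr : 0 < r) (hAB : A ≠ B) :
    ∃ Q ∈ Metric.closedBall P r, ¬Collinear ℝ ({A, Q, B} : Set Pt) := by
  by_contra h
  push_neg at h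
  have key : ∀ Q ∈ Metric.closedBall P r, Q ∈ line[ℝ, A, B] := fun Q hQ =>
    (h Q hQ).mem_affineSpan_of_mem_of_ne (by simp) (by simp) (by simp) hAB
  set v0 : Pt := EuclideanSpace.single 0 (r / 2) with hv0
  set v1 : Pt := EuclideanSpace.single 1 (r / 2) with hv1
  have hb0 : v0 + P ∈ Metric.closedBall P r := by
    rw [Metric.mem_closedBall, dist_eq_norm, add_sub_cancel_right, hv0,
      EuclideanSpace.norm_single]
    rw [Real.norm_eq_abs, abs_of_pos (half_pos hr)]
    linarith
  have hb1 : v1 + P ∈ Metric.closedBall P r := by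
    rw [Metric.mem_closedBall, dist_eq_norm, add_sub_cancel_right, hv1,
      EuclideanSpace.norm_single]
    rw [Real.norm_eq_abs, abs_of_pos (half_pos hr)]
    linarith
  have h0 := key P (Metric.mem_closedBall_self hr.le)
  have h1 := key (v0 + P) hb0
  have h2 := key (v1 + P) hb1
  have hcol : Collinear ℝ ({P, v0 + P, v1 + P} : Set Pt) :=
    (collinear_insert_insert_insert_of_mem_affineSpan_pair h0 h1 h2).subset
      (by intro p hp; simp at hp ⊢; tauto)
  rw [collinear_iff_of_mem (Set.mem_insert P _)] at hcol
  obtain ⟨v, hv⟩ := hcol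
  obtain ⟨a, ha⟩ := hv (v0 + P) (by simp)
  obtain ⟨b, hb⟩ := hv (v1 + P) (by simp)
  rw [vadd_eq_add, add_left_inj] at ha hb
  have e00 : v0 0 = (a • v) 0 := by rw [ha]
  have e01 : v0 1 = (a • v) 1 := by rw [ha]
  have e10 : v1 0 = (b • v) 0 := by rw [hb]
  have e11 : v1 1 = (b • v) 1 := by rw [hb]
  simp only [hv0, hv1, EuclideanSpace.single_apply, PiLp.smul_apply, smul_eq_mul,
    if_pos rfl] at e00 e01 e10 e11
  norm_num at e00 e01 e10 e11
  have hr2 : (r / 2 : ℝ) ≠ 0 := ne_of_gt (half_pos hr)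
  have ha0 : a ≠ 0 := by rintro rfl; rw [zero_mul] at e00; exact hr2 e00
  have hv1z : v 1 = 0 := by
    rcases e01 with h | h
    · exact absurd h ha0
    · exact h
  rw [hv1z, mul_zero] at e11
  exact hr2 e11

/-- If segment `AB` is disjoint from the closed disk `Z` of radius `r` about `P`
and `A`, `B` lie outside `Z`, then any maximizer of the angle `∠ A Q B` over
`Z` lies on the boundary circle of `Z`. -/
theorem stmt1 (A B P Pstar : Pt) (r : ℝ) (hr : 0 < r) (hAB : A ≠ B)
    (hA : dist A P > r) (hB : dist B P > r)
    (hdisj : Disjoint (segment ℝ A B) (Metric.closedBall P r))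
    (hmem : Pstar ∈ Metric.closedBall P r)
    (hmax : ∀ Q ∈ Metric.closedBall P r, ∠ A Q B ≤ ∠ A Pstar B) :
    dist Pstar P = r := by
  have hmemle : dist Pstar P ≤ r := Metric.mem_closedBall.1 hmem
  by_contra hne
  have hlt : dist Pstar P < r := lt_of_le_of_ne hmemle hne
  have hPA : A ≠ Pstar := by
    rintro rfl; exact absurd hmemle (not_le.2 hA)
  have hPB : B ≠ Pstar := by
    rintro rfl; exact absurd hmemle (not_le.2 hB)
  have hPseg : Pstar ∉ segment ℝ A B := fun hs => Set.disjoint_left.1 hdisj hs hmem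
  have hpos : 0 < ∠ A Pstar B := by
    obtain ⟨Q, hQb, hQnc⟩ := exists_good A B P r hr hAB
    exact lt_of_lt_of_le (EuclideanGeometry.angle_pos_of_not_collinear hQnc) (hmax Q hQb)
  have hncol : ¬Collinear ℝ ({A, Pstar, B} : Set Pt) := by
    intro hc
    rcases hc.wbtw_or_wbtw_or_wbtw with h | h | h
    · exact hPseg h.mem_segment
    · refine hpos.ne' ?_
      rw [EuclideanGeometry.angle_comm]
      exact h.angle₂₁₃_eq_zero_of_ne hPB
    · exact hpos.ne' (h.symm.angle₂₁₃_eq_zero_of_ne hPA)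
  set M := midpoint ℝ A B with hMdef
  have hMbtw : Sbtw ℝ A M B := sbtw_midpoint_of_ne (R := ℝ) hAB
  have hMseg : M ∈ segment ℝ A B := midpoint_mem_segment A B
  have hMball : M ∉ Metric.closedBall P r := fun h => Set.disjoint_left.1 hdisj hMseg h
  have hPM : Pstar ≠ M := fun h => hMball (h ▸ hmem)
  have hd : 0 < dist Pstar M := dist_pos.2 hPM
  set ε := r - dist Pstar P with hε
  have hεpos : 0 < ε := sub_pos.2 hlt
  set t : ℝ := min 2⁻¹ (ε / (2 * dist Pstar M)) with ht
  have htpos : 0 < t := lt_min (by norm_num) (div_pos hεpos (by linarith))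
  have htlt : t < 1 := lt_of_le_of_lt (min_le_left _ _) (by norm_num)
  set Q := AffineMap.lineMap Pstar M t with hQdef
  have hsbtw : Sbtw ℝ Pstar Q M := sbtw_lineMap_iff.2 ⟨hPM, htpos, htlt⟩
  have hQP : dist Q Pstar ≤ ε / 2 := by
    rw [hQdef, dist_lineMap_left, Real.norm_eq_abs, abs_of_pos htpos]
    calc t * dist Pstar M ≤ (ε / (2 * dist Pstar M)) * dist Pstar M :=
          mul_le_mul_of_nonneg_right (min_le_right _ _) hd.le
      _ = ε / 2 := by field_simp
  have hQball : Q ∈ Metric.closedBall P r := by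
    rw [Metric.mem_closedBall]
    refine le_of_lt ?_
    calc dist Q P ≤ dist Q Pstar + dist Pstar P := dist_triangle _ _ _
      _ ≤ ε / 2 + dist Pstar P := by linarith
      _ < r := by rw [hε] at hεpos ⊢; linarith
  have hncolQ : ¬Collinear ℝ ({A, Q, B} : Set Pt) := by
    intro hc
    apply hncol
    have hQl : Q ∈ line[ℝ, A, B] :=
      hc.mem_affineSpan_of_mem_of_ne (by simp) (by simp) (by simp) hAB
    have hMl : M ∈ line[ℝ, A, B] := hMbtw.wbtw.mem_affineSpan
    have hcol2 : Collinear ℝ ({Q, Pstar, M} : Set Pt) :=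
      collinear_insert_of_mem_affineSpan_pair hsbtw.wbtw.mem_affineSpan
    have hPl : Pstar ∈ line[ℝ, Q, M] :=
      hcol2.mem_affineSpan_of_mem_of_ne (by simp) (by simp) (by simp) hsbtw.ne_right
    have hle : line[ℝ, Q, M] ≤ line[ℝ, A, B] :=
      affineSpan_le.2 (Set.insert_subset_iff.2 ⟨hQl, Set.singleton_subset_iff.2 hMl⟩)
    exact (collinear_insert_of_mem_affineSpan_pair (hle hPl)).subset
      (by intro p hp; simp at hp ⊢; tauto)
  have hAQ : A ≠ Q := by
    intro h
    apply hncolQ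
    rw [← h]
    exact (collinear_pair ℝ A B).subset (by intro p hp; simp at hp ⊢; tauto)
  have hBQ : B ≠ Q := by
    intro h
    apply hncolQ
    rw [← h]
    exact (collinear_pair ℝ A B).subset (by intro p hp; simp at hp ⊢; tauto)
  have e1 : ∠ A Q M = ∠ A Pstar M + ∠ Pstar A Q := angle_ext hsbtw hAQ hPA
  have e2 : ∠ B Q M = ∠ B Pstar M + ∠ Pstar B Q := angle_ext hsbtw hBQ hPB
  have s1 : ∠ A Q B = ∠ A Q M + ∠ M Q B := angle_split hMbtw hncolQ
  have s2 : ∠ A Pstar B = ∠ A Pstar M + ∠ M Pstar B := angle_split hMbtw hncol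
  have hstrict : 0 < ∠ Pstar A Q + ∠ Pstar B Q := by
    by_contra hc
    push_neg at hc
    have n1 := EuclideanGeometry.angle_nonneg Pstar A Q
    have n2 := EuclideanGeometry.angle_nonneg Pstar B Q
    have h1 : ∠ Pstar A Q = 0 := by linarith
    have h2 : ∠ Pstar B Q = 0 := by linarith
    have c1 := EuclideanGeometry.collinear_of_angle_eq_zero h1
    have c2 := EuclideanGeometry.collinear_of_angle_eq_zero h2
    have hPQ : Pstar ≠ Q := hsbtw.ne_left.symm
    have hAl : A ∈ line[ℝ, Pstar, Q] :=
      c1.mem_affineSpan_of_mem_of_ne (by simp) (by simp) (by simp) hPQ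
    have hBl : B ∈ line[ℝ, Pstar, Q] :=
      c2.mem_affineSpan_of_mem_of_ne (by simp) (by simp) (by simp) hPQ
    exact hncol ((collinear_insert_insert_of_mem_affineSpan_pair hAl hBl).subset
      (by intro p hp; simp at hp ⊢; tauto))
  have hle := hmax Q hQball
  have cQ : ∠ M Q B = ∠ B Q M := EuclideanGeometry.angle_comm _ _ _
  have cP : ∠ M Pstar B = ∠ B Pstar M := EuclideanGeometry.angle_comm _ _ _
  linarith
end

section
/- Let A, B be distinct points, Z a circle of radius r centered at P with A, B outside Z and segment AB disjoint from Z. If P* on the boundary of Z maximizes ∠AP*B over the closed disk, then the circle passing through A, B, and P* is internally tangent to Z at P*; i.e., the open region bounded by the arc AP*B on the side of P* contains no point of the open disk Z other than boundary touching at P*. -/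
open EuclideanGeometry Real

open RealInnerProductSpace


noncomputable def lf (A B z : Pt) : ℝ :=
  (z 0 - A 0) * (B 1 - A 1) - (z 1 - A 1) * (B 0 - A 0)

lemma mem_line_of {A B z : Pt} (t : ℝ) (h0 : z 0 - A 0 = t * (B 0 - A 0))
    (h1 : z 1 - A 1 = t * (B 1 - A 1)) : z ∈ line[ℝ, A, B] := by
  have h : (z -ᵥ A) +ᵥ A ∈ line[ℝ, A, B] := by
    refine vadd_left_mem_affineSpan_pair.2 ⟨t, ?_⟩
    ext i
    fin_cases i
    · simpa [PiLp.smul_apply, smul_eq_mul] using h0.symm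
    · simpa [PiLp.smul_apply, smul_eq_mul] using h1.symm
  simpa using h

lemma mem_line_iff {A B z : Pt} (hAB : A ≠ B) :
    z ∈ line[ℝ, A, B] ↔ lf A B z = 0 := by
  constructor
  · intro hz
    have h0 : (z -ᵥ A) +ᵥ A ∈ line[ℝ, A, B] := by simpa using hz
    rcases vadd_left_mem_affineSpan_pair.1 h0 with ⟨t, ht⟩
    have h1 : z 0 - A 0 = t * (B 0 - A 0) := by
      have := congrArg (fun v : Pt => v 0) ht
      simpa [PiLp.smul_apply, smul_eq_mul] using this.symm
    have h2 : z 1 - A 1 = t * (B 1 - A 1) := by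
      have := congrArg (fun v : Pt => v 1) ht
      simpa [PiLp.smul_apply, smul_eq_mul] using this.symm
    unfold lf; rw [h1, h2]; ring
  · intro h
    unfold lf at h
    have hd : B 0 - A 0 ≠ 0 ∨ B 1 - A 1 ≠ 0 := by
      by_contra hc
      push_neg at hc
      apply hAB
      ext i
      fin_cases i
      · show A 0 = B 0
        have := hc.1; linarith
      · show A 1 = B 1
        have := hc.2; linarith
    rcases hd with hd | hd
    · refine mem_line_of ((z 0 - A 0)/(B 0 - A 0)) (by field_simp) ?_
      field_simp
      linarith
    · refine mem_line_of ((z 1 - A 1)/(B 1 - A 1)) ?_ (by field_simp)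
      field_simp
      linarith

lemma lf_lineMap (A B x y : Pt) (s : ℝ) :
    lf A B (AffineMap.lineMap x y s) = (1 - s) * lf A B x + s * lf A B y := by
  have h : ∀ i, (AffineMap.lineMap x y s : Pt) i = s * (y i - x i) + x i := by
    intro i
    simp [AffineMap.lineMap_apply, PiLp.smul_apply, smul_eq_mul]
  unfold lf
  rw [h 0, h 1]
  ring

lemma coord_helper (c : ℝ) (v y : Pt) (i : Fin 2) :
    ((c • v +ᵥ y : Pt)) i = c * v i + y i := by
  simp [PiLp.smul_apply, smul_eq_mul]

lemma sSameSide_of_seg_disjoint {A B x y : Pt} (hAB : A ≠ B)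
    (hx : x ∉ line[ℝ, A, B]) (hy : y ∉ line[ℝ, A, B])
    (hseg : ∀ z ∈ segment ℝ x y, z ∉ line[ℝ, A, B]) :
    (line[ℝ, A, B]).SSameSide x y := by
  have hfx : lf A B x ≠ 0 := fun h => hx ((mem_line_iff hAB).2 h)
  have hfy : lf A B y ≠ 0 := fun h => hy ((mem_line_iff hAB).2 h)
  have hsign : 0 < lf A B y / lf A B x := by
    by_contra hc
    push_neg at hc
    have hprod : lf A B x * lf A B y < 0 := by
      rcases hc.lt_or_eq with h | h
      · rcases div_neg_iff.1 h with ⟨h1, h2⟩ | ⟨h1, h2⟩ <;> nlinarith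
      · exact absurd (div_eq_zero_iff.1 h) (by push_neg; exact ⟨hfy, hfx⟩)
    set fx := lf A B x
    set fy := lf A B y
    have hne : fx - fy ≠ 0 := by
      intro h; rw [sub_eq_zero] at h; rw [h] at hprod; nlinarith [sq_nonneg fy]
    set s : ℝ := fx / (fx - fy) with hs
    have hs0 : 0 ≤ s := by
      rcases lt_or_gt_of_ne hfx with h | h
      · have : fx - fy < 0 := by nlinarith
        exact le_of_lt (div_pos_iff.2 (Or.inr ⟨h, this⟩))
      · have : 0 < fx - fy := by nlinarith
        exact le_of_lt (div_pos_iff.2 (Or.inl ⟨h, this⟩))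
    have hs1 : s ≤ 1 := by
      rw [hs, div_le_one_iff]
      rcases lt_or_gt_of_ne hfx with h | h
      · exact Or.inr (Or.inr ⟨by nlinarith, by nlinarith⟩)
      · exact Or.inl ⟨by nlinarith, by nlinarith⟩
    have hzmem : AffineMap.lineMap x y s ∈ segment ℝ x y := by
      rw [segment_eq_image_lineMap]
      exact ⟨s, ⟨hs0, hs1⟩, rfl⟩
    refine hseg _ hzmem ((mem_line_iff hAB).2 ?_)
    rw [lf_lineMap, hs]
    field_simp
    ring
  refine (AffineSubspace.sSameSide_iff_exists_left
    (left_mem_affineSpan_pair ℝ A B)).2 ⟨hx, hy, ?_⟩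
  set c := lf A B y / lf A B x with hc
  refine ⟨(-c) • (x -ᵥ A) +ᵥ y, ?_, ?_⟩
  · refine (mem_line_iff hAB).2 ?_
    have h0 := coord_helper (-c) (x -ᵥ A) y 0
    have h1 := coord_helper (-c) (x -ᵥ A) y 1
    have hv0 : (x -ᵥ A : Pt) 0 = x 0 - A 0 := rfl
    have hv1 : (x -ᵥ A : Pt) 1 = x 1 - A 1 := rfl
    unfold lf
    rw [h0, h1, hv0, hv1]
    have hfxd : lf A B x = (x 0 - A 0) * (B 1 - A 1) - (x 1 - A 1) * (B 0 - A 0) := rfl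
    have hfyd : lf A B y = (y 0 - A 0) * (B 1 - A 1) - (y 1 - A 1) * (B 0 - A 0) := rfl
    have : c * lf A B x = lf A B y := by
      rw [hc]; field_simp
    rw [hfxd, hfyd] at this
    nlinarith [this]
  · have heq : y -ᵥ ((-c) • (x -ᵥ A) +ᵥ y) = c • (x -ᵥ A) := by
      rw [vsub_vadd_eq_vsub_sub, vsub_self, zero_sub, neg_smul, neg_neg]
    rw [heq]
    exact SameRay.sameRay_nonneg_smul_right _ hsign.le

lemma line_sphere {A B O z : Pt} {r' : ℝ} (hAB : A ≠ B)
    (hOA : dist O A = r') (hOB : dist O B = r') (hz : z ∈ line[ℝ, A, B]) :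
    (dist z O ≤ r' → z ∈ segment ℝ A B) ∧ (dist z O = r' → z = A ∨ z = B) := by
  have h0 : (z -ᵥ A) +ᵥ A ∈ line[ℝ, A, B] := by simpa using hz
  rcases vadd_left_mem_affineSpan_pair.1 h0 with ⟨t, ht⟩
  have hzt : z = t • (B -ᵥ A) +ᵥ A := by rw [ht, vsub_vadd]
  set d : Pt := B -ᵥ A with hd
  set v : Pt := A -ᵥ O with hv
  have hdne : d ≠ 0 := by
    rw [hd, vsub_ne_zero]; exact hAB.symm
  have hdpos : 0 < ‖d‖^2 := by
    have : 0 < ‖d‖ := norm_pos_iff.2 hdne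
    positivity
  have hvnorm : ‖v‖ = r' := by rw [hv, ← dist_eq_norm_vsub, dist_comm]; exact hOA
  have hwnorm : ‖d + v‖ = r' := by
    rw [hd, hv, vsub_add_vsub_cancel, ← dist_eq_norm_vsub, dist_comm]; exact hOB
  have hzv : z -ᵥ O = t • d + v := by
    rw [hzt, vadd_vsub_assoc, hd, hv]
  have hkey : dist z O ^ 2 = r' ^ 2 + t * (t - 1) * ‖d‖ ^ 2 := by
    have hinner : 2 * ⟪d, v⟫ = -‖d‖^2 := by
      have e1 : ‖d + v‖^2 = ‖d‖^2 + 2 * ⟪d, v⟫ + ‖v‖^2 := norm_add_sq_real d v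
      rw [hwnorm, hvnorm] at e1
      linarith
    calc dist z O ^ 2 = ‖t • d + v‖^2 := by rw [dist_eq_norm_vsub, hzv]
    _ = ‖t • d‖^2 + 2 * (t * ⟪d, v⟫) + ‖v‖^2 := by
        rw [norm_add_sq_real, real_inner_smul_left]
    _ = t^2 * ‖d‖^2 + 2 * (t * ⟪d, v⟫) + r'^2 := by
        rw [norm_smul, hvnorm, mul_pow]
        simp [Real.norm_eq_abs, sq_abs]
    _ = r' ^ 2 + t * (t - 1) * ‖d‖ ^ 2 := by linear_combination t * hinner
  have hr'0 : 0 ≤ r' := by rw [← hOA]; exact dist_nonneg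
  constructor
  · intro hle
    have h2 : t * (t - 1) * ‖d‖ ^ 2 ≤ 0 := by nlinarith [dist_nonneg (x := z) (y := O)]
    have ht01 : 0 ≤ t ∧ t ≤ 1 := by
      constructor
      · by_contra hcon; push_neg at hcon
        nlinarith [h2, hdpos, mul_pos (neg_pos.2 hcon) (by linarith : (0:ℝ) < 1 - t)]
      · by_contra hcon; push_neg at hcon
        nlinarith [h2, hdpos, mul_pos (by linarith : (0:ℝ) < t) (by linarith : (0:ℝ) < t - 1)]
    rw [segment_eq_image_lineMap]
    exact ⟨t, ⟨ht01.1, ht01.2⟩, by rw [AffineMap.lineMap_apply, ← hzt]⟩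
  · intro heq
    have h2 : t * (t - 1) * ‖d‖ ^ 2 = 0 := by nlinarith
    have ht01 : t = 0 ∨ t = 1 := by
      rcases mul_eq_zero.1 h2 with h | h
      · rcases mul_eq_zero.1 h with h | h
        · exact Or.inl h
        · exact Or.inr (by linarith)
      · exact absurd h (by positivity)
    rcases ht01 with h | h
    · left; rw [hzt, h, zero_smul, zero_vadd]
    · right; rw [hzt, h, one_smul, hd, vsub_vadd]

instance : Fact (Module.finrank ℝ Pt = 2) := ⟨finrank_euclideanSpace_fin⟩
noncomputable instance : Module.Oriented ℝ Pt (Fin 2) :=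
  ⟨(EuclideanSpace.basisFun (Fin 2) ℝ).toBasis.orientation⟩

set_option maxHeartbeats 1000000 in
lemma angle_lt_of_inside {A B Q Pstar O : Pt} {r' : ℝ}
    (hAB : A ≠ B) (hOA : dist O A = r') (hOB : dist O B = r') (hOPs : dist O Pstar = r')
    (hQ : dist Q O < r')
    (hside : (line[ℝ, A, B]).SSameSide Q Pstar) :
    ∠ A Pstar B < ∠ A Q B := by
  set s : EuclideanGeometry.Sphere Pt := ⟨O, r'⟩ with hs
  have hA : A ∈ s := by
    rw [EuclideanGeometry.mem_sphere]; show dist A O = r'; rw [dist_comm]; exact hOA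
  have hB : B ∈ s := by
    rw [EuclideanGeometry.mem_sphere]; show dist B O = r'; rw [dist_comm]; exact hOB
  have hPs : Pstar ∈ s := by
    rw [EuclideanGeometry.mem_sphere]; show dist Pstar O = r'; rw [dist_comm]; exact hOPs
  have hQs : dist Q s.center < s.radius := hQ
  set C : Pt := s.secondInter A (Q -ᵥ A) with hC
  have hsbtw : Sbtw ℝ A Q C := EuclideanGeometry.Sphere.sbtw_secondInter hA hQs
  have hCmem : C ∈ s := (EuclideanGeometry.Sphere.secondInter_mem _).2 hA
  have hQnot : Q ∉ line[ℝ, A, B] := hside.left_notMem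
  have hPsnot : Pstar ∉ line[ℝ, A, B] := hside.right_notMem
  have hQA : Q ≠ A := fun h => hQnot (h ▸ left_mem_affineSpan_pair ℝ A B)
  have hQB : Q ≠ B := fun h => hQnot (h ▸ right_mem_affineSpan_pair ℝ A B)
  have hPsA : Pstar ≠ A := fun h => hPsnot (h ▸ left_mem_affineSpan_pair ℝ A B)
  have hPsB : Pstar ≠ B := fun h => hPsnot (h ▸ right_mem_affineSpan_pair ℝ A B)
  have hCA : C ≠ A := hsbtw.left_ne_right.symm
  have hCB : C ≠ B := by
    rintro rfl
    exact hQnot hsbtw.wbtw.mem_affineSpan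
  have hCdist : dist C O = r' := hCmem
  have hCnot : C ∉ line[ℝ, A, B] := by
    intro hCl
    rcases (line_sphere hAB hOA hOB hCl).2 hCdist with h | h
    · exact hCA h
    · exact hCB h
  have hQCside : (line[ℝ, A, B]).SSameSide Q C :=
    ⟨hsbtw.wbtw.wSameSide₂₃ (left_mem_affineSpan_pair ℝ A B), hQnot, hCnot⟩
  have hCPs : (line[ℝ, A, B]).SSameSide C Pstar := hQCside.symm.trans hside
  -- inscribed angle equality
  have hACB : ∠ A C B = ∠ A Pstar B := by
    have h2 : (2 : ℤ) • ∡ A C B = (2 : ℤ) • ∡ A Pstar B :=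
      EuclideanGeometry.Sphere.two_zsmul_oangle_eq hA hCmem hPs hB hCA hCB hPsA hPsB
    have hsign : (∡ A C B).sign = (∡ A Pstar B).sign :=
      hCPs.symm.oangle_sign_eq (left_mem_affineSpan_pair ℝ A B)
        (right_mem_affineSpan_pair ℝ A B)
    have hnz : (∡ A Pstar B).sign ≠ 0 := by
      rw [Ne, EuclideanGeometry.oangle_sign_eq_zero_iff_collinear]
      intro hcol
      exact hPsnot (hcol.mem_affineSpan_of_mem_of_ne (by simp) (by simp [Set.mem_insert_iff])
        (by simp [Set.mem_insert_iff]) hAB)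
    have heq : ∡ A C B = ∡ A Pstar B := by
      rcases Real.Angle.two_zsmul_eq_iff.1 h2 with h | h
      · exact h
      · exfalso
        rw [h, Real.Angle.sign_add_pi] at hsign
        have : ∀ a : SignType, -a = a → a = 0 := by decide
        exact hnz (this _ hsign)
    rw [EuclideanGeometry.angle_eq_abs_oangle_toReal hCA.symm hCB.symm,
      EuclideanGeometry.angle_eq_abs_oangle_toReal hPsA.symm hPsB.symm, heq]
  -- exterior angle argument
  have hAQC : ∠ A Q C = π := hsbtw.angle₁₂₃_eq_pi
  have hCQA : ∠ C Q A = π := hsbtw.angle₃₂₁_eq_pi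
  have h4 : ∠ B C Q = ∠ B C A := EuclideanGeometry.angle_eq_angle_of_angle_eq_pi B hCQA
  have hsum : ∠ B Q A + ∠ B Q C = π :=
    EuclideanGeometry.angle_add_angle_eq_pi_of_angle_eq_pi B hAQC
  have hQC : Q ≠ C := hsbtw.ne_right
  have htri : ∠ Q C B + ∠ C B Q + ∠ B Q C = π :=
    EuclideanGeometry.angle_add_angle_add_angle_eq_pi B hQC.symm
  have hpos : 0 < ∠ C B Q := by
    rcases (EuclideanGeometry.angle_nonneg C B Q).lt_or_eq with h | h
    · exact h
    · exfalso
      have hAQ : A ≠ Q := hQA.symm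
      have hColAQC : Collinear ℝ ({A, Q, C} : Set Pt) := s.secondInter_collinear A Q
      have hCL : C ∈ line[ℝ, A, Q] :=
        hColAQC.mem_affineSpan_of_mem_of_ne (by simp) (by simp) (by simp) hAQ
      have hBL : B ∈ line[ℝ, A, Q] := by
        have hBQC : B ∈ line[ℝ, Q, C] := by
          rcases EuclideanGeometry.angle_eq_zero_iff_ne_and_wbtw.1 h.symm with
            ⟨hne, hw⟩ | ⟨hne, hw⟩
          · have hcol : Collinear ℝ ({C, B, Q} : Set Pt) :=
              collinear_insert_of_mem_affineSpan_pair hw.mem_affineSpan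
            exact hcol.mem_affineSpan_of_mem_of_ne (by simp) (by simp) (by simp) hQC
          · have hcol : Collinear ℝ ({Q, B, C} : Set Pt) :=
              collinear_insert_of_mem_affineSpan_pair hw.mem_affineSpan
            exact hcol.mem_affineSpan_of_mem_of_ne (by simp) (by simp) (by simp) hQC
        exact affineSpan_pair_le_of_mem_of_mem (right_mem_affineSpan_pair ℝ A Q) hCL hBQC
      have hBmk : B ∈ AffineSubspace.mk' A (ℝ ∙ (Q -ᵥ A)) := by
        have h0 : (B -ᵥ A) +ᵥ A ∈ line[ℝ, A, Q] := by simpa using hBL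
        rcases vadd_left_mem_affineSpan_pair.1 h0 with ⟨t, ht⟩
        rw [AffineSubspace.mem_mk', Submodule.mem_span_singleton]
        exact ⟨t, ht⟩
      rcases (EuclideanGeometry.Sphere.eq_or_eq_secondInter_of_mem_mk'_span_singleton_iff_mem
        hA hBmk).2 hB with hh | hh
      · exact hAB hh.symm
      · exact hCB hh.symm
  have hqcb : ∠ Q C B = ∠ A Pstar B := by
    rw [EuclideanGeometry.angle_comm Q C B, h4, EuclideanGeometry.angle_comm B C A, hACB]
  have hcommA : ∠ A Q B = ∠ B Q A := EuclideanGeometry.angle_comm A Q B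
  linarith

/-- If `Pstar` on the boundary of the disk `Z` of radius `r` about `P`
maximizes `∠ A Q B` over `Z` (with `A`, `B` outside `Z` and segment `AB`
disjoint from `Z`), then the circumcircle of `A`, `B`, `Pstar`, with center `O`
and radius `r'`, is tangent to `Z` at `Pstar`: `|OP| = r + r'` and
`P`, `Pstar`, `O` are collinear. -/
theorem stmt2 (A B P Pstar O : Pt) (r r' : ℝ) (hr : 0 < r) (hr' : 0 < r')
    (hAB : A ≠ B)
    (hA : dist A P > r) (hB : dist B P > r)
    (hdisj : Disjoint (segment ℝ A B) (Metric.closedBall P r))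
    (hmem : dist Pstar P = r)
    (hmax : ∀ Q ∈ Metric.closedBall P r, ∠ A Q B ≤ ∠ A Pstar B)
    (hOA : dist O A = r') (hOB : dist O B = r') (hOP : dist O Pstar = r') :
    dist O P = r + r' ∧ Collinear ℝ ({P, Pstar, O} : Set Pt) := by

  have htri : dist O P ≤ r + r' := by
    calc dist O P ≤ dist O Pstar + dist Pstar P := dist_triangle _ _ _
    _ = r + r' := by rw [hOP, hmem]; ring
  have hmain : dist O P = r + r' := by
    by_contra hne
    have hlt : dist O P < r + r' := lt_of_le_of_ne htri hne
    obtain ⟨X, hX1, hX2⟩ : ∃ X : Pt, dist X P ≤ r ∧ dist X O < r' := by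
      by_cases hc : dist O P ≤ r
      · exact ⟨O, dist_comm O P ▸ hc, by simp [hr']⟩
      · push_neg at hc
        have hd0 : 0 < dist P O := by rw [dist_comm]; linarith
        refine ⟨AffineMap.lineMap P O (r / dist P O), ?_, ?_⟩
        · rw [dist_lineMap_left]
          rw [Real.norm_eq_abs, abs_of_nonneg (by positivity)]
          rw [div_mul_cancel₀ _ (ne_of_gt hd0)]
        · rw [dist_lineMap_right]
          rw [Real.norm_eq_abs, abs_of_nonneg (by rw [sub_nonneg, div_le_one hd0, dist_comm]; linarith)]
          rw [sub_mul, one_mul, div_mul_cancel₀ _ (ne_of_gt hd0), dist_comm]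
          linarith
    -- points of the lens are off the line AB
    have hK : ∀ z : Pt, dist z P ≤ r → dist z O ≤ r' → z ∉ line[ℝ, A, B] := by
      intro z hz1 hz2 hzl
      have hseg : z ∈ segment ℝ A B := (line_sphere hAB hOA hOB hzl).1 hz2
      exact Set.disjoint_left.1 hdisj hseg (Metric.mem_closedBall.2 hz1)
    have hPsP : dist Pstar O ≤ r' := by rw [dist_comm]; exact le_of_eq hOP
    have hsegK : ∀ z ∈ segment ℝ X Pstar, z ∉ line[ℝ, A, B] := by
      intro z hz
      have h1 : z ∈ Metric.closedBall P r :=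
        (convex_closedBall P r).segment_subset (Metric.mem_closedBall.2 hX1)
          (Metric.mem_closedBall.2 (le_of_eq hmem)) hz
      have h2 : z ∈ Metric.closedBall O r' :=
        (convex_closedBall O r').segment_subset (Metric.mem_closedBall.2 hX2.le)
          (Metric.mem_closedBall.2 hPsP) hz
      exact hK z (Metric.mem_closedBall.1 h1) (Metric.mem_closedBall.1 h2)
    have hXnot : X ∉ line[ℝ, A, B] := hsegK X (left_mem_segment ℝ X Pstar)
    have hPsnot : Pstar ∉ line[ℝ, A, B] := hsegK Pstar (right_mem_segment ℝ X Pstar)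
    have hside := sSameSide_of_seg_disjoint hAB hXnot hPsnot hsegK
    have hangle := angle_lt_of_inside hAB hOA hOB hOP hX2 hside
    have hle := hmax X (Metric.mem_closedBall.2 hX1)
    linarith
  refine ⟨hmain, ?_⟩
  have hw : Wbtw ℝ O Pstar P := by
    rw [← dist_add_dist_eq_iff, hOP, hmem, hmain]; ring
  have hcol := hw.collinear
  have hsets : ({P, Pstar, O} : Set Pt) = ({O, Pstar, P} : Set Pt) := by
    ext z; simp only [Set.mem_insert_iff, Set.mem_singleton_iff]; tauto
  rw [hsets]
  exact hcol
end

section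
/- Let A = (0, -1), B = (0, 1), and P a point with |AP| > r and |BP| > r for some r > 0, and suppose segment AB is disjoint from the closed disk of radius r about P. Then there exists r' > 0 satisfying the quadratic system: the point O = (x, 0) with 2 P_x x = P_x² + P_y² - 2 r' r - r² - 1 satisfies x² + 1 = r'², and (x - P_x)² + P_y² = (r + r')². Moreover, the maximizer P* of ∠AP'B over the disk is the intersection of the boundary circle of the disk with segment OP, where r' is the smaller positive root of the resulting quadratic in r'. -/
set_option maxHeartbeats 1000000


open EuclideanGeometry Real

theorem dist_sq' (X Y : Pt) : (dist X Y)^2 = (X 0 - Y 0)^2 + (X 1 - Y 1)^2 := by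
  rw [EuclideanSpace.dist_eq, Real.sq_sqrt (by positivity)]
  simp [Fin.sum_univ_two, Real.dist_eq, sq_abs]

theorem cos_coord' (X Q Y : Pt) :
    Real.cos (∠ X Q Y) = ((X 0 - Q 0)*(Y 0 - Q 0) + (X 1 - Q 1)*(Y 1 - Q 1))/(dist X Q * dist Y Q) := by
  rw [EuclideanGeometry.angle, InnerProductGeometry.cos_angle]
  congr 1
  · simp [PiLp.inner_apply, Fin.sum_univ_two]; ring

theorem sqeq' {a b : ℝ} (ha : 0 ≤ a) (hb : 0 ≤ b) (h : a^2 = b^2) : a = b := by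
  rw [← Real.sqrt_sq ha, ← Real.sqrt_sq hb, h]

noncomputable def mk2 (a b : ℝ) : Pt := (WithLp.equiv 2 (Fin 2 → ℝ)).symm ![a, b]
@[simp] theorem mk2_0 (a b : ℝ) : mk2 a b 0 = a := rfl
@[simp] theorem mk2_1 (a b : ℝ) : mk2 a b 1 = b := rfl

theorem cosbound' (l r' S m w : ℝ) (hr' : 0 < r') (hrl : r'^2 = l^2+1) (hm : 0 ≤ m)
    (hm2 : m^2 = S^2+4*w^2) (hw : 0 ≤ w) (hF : 2*l*w ≤ S) : l*m ≤ r'*S := by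
  rcases le_or_gt 0 l with hl | hl
  · have hS0 : 0 ≤ S := le_trans (by positivity) hF
    have key : (r'*S)^2 - (l*m)^2 = (S-2*l*w)*(S+2*l*w) := by
      linear_combination S^2*hrl - l^2*hm2
    nlinarith [key, hF, mul_nonneg hl hw, mul_nonneg hr'.le hS0, mul_nonneg hl hm]
  · rcases le_or_gt 0 S with hS | hS
    · have h1 : l*m ≤ 0 := mul_nonpos_of_nonpos_of_nonneg hl.le hm
      have h2 : 0 ≤ r'*S := mul_nonneg hr'.le hS
      linarith
    · have key : (l*m)^2 - (r'*S)^2 = (2*l*w - S)*(2*l*w + S) := by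
        linear_combination l^2*hm2 - S^2*hrl
      have hprod : 0 ≤ (l*m)^2 - (r'*S)^2 := by
        rw [key]
        nlinarith [hF, hS]
      have h1 : l*m ≤ 0 := mul_nonpos_of_nonpos_of_nonneg hl.le hm
      have h2 : r'*S < 0 := mul_neg_of_pos_of_neg hr' hS
      nlinarith [hprod, h1, h2]


theorem alg_root (p q r w pi r' x : ℝ) (hp : p ≠ 0)
    (hM : (p^2+q^2-1-r^2)*r + pi*w ≠ 0)
    (hw2 : w^2 = (p^2+q^2-1-r^2)^2+4*p^2-4*r^2) (hpi2 : pi^2 = p^2)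
    (hr' : 2*((p^2+q^2-1-r^2)*r + pi*w)*r' = (p^2+q^2-1-r^2)^2+4*p^2)
    (hx : 2*p*x = (p^2+q^2-1-r^2) - 2*r*r') :
    x^2+1 = r'^2 ∧ 2*(r^2-p^2)*r' = (p^2+q^2-1-r^2)*r - pi*w := by
  have hroot : 2*(r^2-p^2)*r' = (p^2+q^2-1-r^2)*r - pi*w := by
    have h0 : ((p^2+q^2-1-r^2)*r + pi*w) *
        (2*(r^2-p^2)*r' - ((p^2+q^2-1-r^2)*r - pi*w)) = 0 := by
      linear_combination (r^2-p^2)*hr' + pi^2*hw2 +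
        ((p^2+q^2-1-r^2)^2+4*p^2-4*r^2)*hpi2
    rcases mul_eq_zero.1 h0 with h | h
    · exact absurd h hM
    · linarith
  refine ⟨?_, hroot⟩
  have hg : ((p^2+q^2-1-r^2) - 2*r*r')^2 + 4*p^2 - 4*p^2*r'^2 = 0 := by
    linear_combination (-1)*hr' + (2*r')*hroot
  have h5 : 4*p^2*(x^2+1-r'^2) = 0 := by
    linear_combination (2*p*x + ((p^2+q^2-1-r^2) - 2*r*r'))*hx + hg
  have h6 : (4:ℝ)*p^2 ≠ 0 := by positivity
  rcases mul_eq_zero.1 h5 with h | h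
  · exact absurd h h6
  · linarith

theorem alg_min (p q r w pi r'' : ℝ) (hr'' : 0 < r'')
    (hw2 : w^2 = (p^2+q^2-1-r^2)^2+4*p^2-4*r^2) (hpi2 : pi^2 = p^2)
    (hpiw : 0 ≤ pi*w)
    (h4 : ((p^2+q^2-1-r^2) - 2*r*r'')^2 + 4*p^2 = 4*p^2*r''^2) :
    (p^2+q^2-1-r^2)^2+4*p^2 ≤ 2*((p^2+q^2-1-r^2)*r + pi*w)*r'' := by
  have hsq : ((p^2+q^2-1-r^2)*r - 2*(r^2-p^2)*r'')^2 = (pi*w)^2 := by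
    linear_combination (r^2-p^2)*h4 + (-p^2)*hw2 + (-w^2)*hpi2
  have hle : (p^2+q^2-1-r^2)*r - 2*(r^2-p^2)*r'' ≤ pi*w := by
    nlinarith [hsq, hpiw]
  nlinarith [hle, h4, hr'']

theorem quad_sol (p q r : ℝ) (hp : p ≠ 0) (hr : 0 < r)
    (h1 : |q| ≤ 1 → r^2 < p^2)
    (h2 : r^2 < p^2 + (q-1)^2) (h3 : r^2 < p^2 + (q+1)^2) :
    ∃ r' x : ℝ, 0 < r' ∧ 2*p*x = p^2+q^2-2*r'*r-r^2-1 ∧ x^2+1 = r'^2 ∧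
    (∀ r'' x'' : ℝ, 0 < r'' → 2*p*x'' = p^2+q^2-2*r''*r-r^2-1 → x''^2+1 = r''^2 → r' ≤ r'') ∧
    0 < p*(r*x+p*r') := by
  have hppos : 0 < p^2 := by positivity
  set pp : ℝ := |p| with hppdef
  have hpi2 : pp^2 = p^2 := sq_abs p
  have hpipos : 0 < pp := abs_pos.2 hp
  have hKD : 0 < (p^2+q^2-1-r^2)^2+4*p^2-4*r^2 ∧
      0 < (p^2+q^2-1-r^2)*r + pp * Real.sqrt ((p^2+q^2-1-r^2)^2+4*p^2-4*r^2) := by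
    rcases lt_or_ge (r^2) (p^2) with hpr | hpr
    · have hD : 0 < (p^2+q^2-1-r^2)^2+4*p^2-4*r^2 := by nlinarith [sq_nonneg (p^2+q^2-1-r^2)]
      refine ⟨hD, ?_⟩
      have hw : 0 < Real.sqrt ((p^2+q^2-1-r^2)^2+4*p^2-4*r^2) := Real.sqrt_pos.2 hD
      have hw2 : (Real.sqrt ((p^2+q^2-1-r^2)^2+4*p^2-4*r^2))^2
          = (p^2+q^2-1-r^2)^2+4*p^2-4*r^2 := Real.sq_sqrt hD.le
      rcases le_or_gt 0 (p^2+q^2-1-r^2) with hK0 | hK0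
      · positivity
      · nlinarith [mul_pos hpipos hw,
          sq_nonneg (pp * Real.sqrt ((p^2+q^2-1-r^2)^2+4*p^2-4*r^2) + (p^2+q^2-1-r^2)*r)]
    · have hq1 : 1 < |q| := by
        by_contra h
        push_neg at h
        exact absurd (h1 h) (by linarith)
      have hKpos : 0 < p^2+q^2-1-r^2 ∧ 0 < (p^2+q^2-1-r^2)^2+4*p^2-4*r^2 := by
        rcases le_or_gt 0 q with hq | hq
        · have hq' : 1 < q := by rwa [abs_of_nonneg hq] at hq1
          constructor
          · nlinarith
          · nlinarith [sq_nonneg ((q-1)^2 - (r^2 - p^2))]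
        · have hq' : q < -1 := by have := abs_of_neg hq; nlinarith
          constructor
          · nlinarith
          · nlinarith [sq_nonneg ((q+1)^2 - (r^2 - p^2))]
      refine ⟨hKpos.2, ?_⟩
      have h0 : 0 ≤ pp * Real.sqrt ((p^2+q^2-1-r^2)^2+4*p^2-4*r^2) := by positivity
      nlinarith [hKpos.1]
  obtain ⟨hD, hM⟩ := hKD
  set w : ℝ := Real.sqrt ((p^2+q^2-1-r^2)^2+4*p^2-4*r^2) with hwdef
  have hw0 : 0 < w := Real.sqrt_pos.2 hD
  have hw2 : w^2 = (p^2+q^2-1-r^2)^2+4*p^2-4*r^2 := Real.sq_sqrt hD.le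
  have hMpos : 0 < (p^2+q^2-1-r^2)*r + pp*w := hM
  have hNpos : 0 < (p^2+q^2-1-r^2)^2+4*p^2 := by positivity
  set r' : ℝ := ((p^2+q^2-1-r^2)^2+4*p^2) / (2*((p^2+q^2-1-r^2)*r + pp*w)) with hr'def
  have hr'pos : 0 < r' := by positivity
  have hr'eq : 2*((p^2+q^2-1-r^2)*r + pp*w)*r' = (p^2+q^2-1-r^2)^2+4*p^2 := by
    rw [hr'def]; field_simp
    exact div_self (ne_of_gt (by linarith [hMpos, mul_comm r (p^2+q^2-1-r^2)]))
  set x : ℝ := ((p^2+q^2-1-r^2) - 2*r*r')/(2*p) with hxdef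
  have hxeq : 2*p*x = (p^2+q^2-1-r^2) - 2*r*r' := by
    rw [hxdef]; field_simp
  clear_value r' x
  obtain ⟨heq2, hroot⟩ := alg_root p q r w pp r' x hp (ne_of_gt hMpos) hw2 hpi2 hr'eq hxeq
  refine ⟨r', x, hr'pos, by linarith [hxeq], heq2, ?_, ?_⟩
  · intro r'' x'' hr'' e1 e2
    have e1' : 2*p*x'' = (p^2+q^2-1-r^2) - 2*r*r'' := by linarith
    have h4 : ((p^2+q^2-1-r^2) - 2*r*r'')^2 + 4*p^2 = 4*p^2*r''^2 := by
      linear_combination 4*p^2*e2 - (2*p*x'' + ((p^2+q^2-1-r^2) - 2*r*r''))*e1'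
    have hmin := alg_min p q r w pp r'' hr'' hw2 hpi2 (by positivity) h4
    rw [hr'def, div_le_iff₀ (by positivity)]
    linarith [hmin]
  · have h7 : p*(r*x+p*r') = pp*w/2 := by
      have h6 : 2*(p*(r*x+p*r')) = pp*w := by
        linear_combination r*hxeq + (-1)*hroot
      linarith
    rw [h7]; positivity

theorem pos_of_mul_eq (a b c : ℝ) (h : a*b = c) (hb : 0 < b) (hc : 0 < c) : 0 < a := by
  rcases le_or_gt a 0 with ha | ha
  · nlinarith
  · exact ha

theorem lt_of_sq_lt (s d : ℝ) (hd : 0 ≤ d) (hs : 0 ≤ s) (h : s^2 < d^2) : s < d := by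
  nlinarith

theorem sq_lt_of_lt (s d : ℝ) (hs : 0 ≤ s) (h : s < d) : s^2 < d^2 := by nlinarith

theorem sq_add_sq_eq_zero (a b : ℝ) (h : a^2 + b^2 = 0) : a = 0 ∧ b = 0 := by
  constructor <;> nlinarith [sq_nonneg a, sq_nonneg b]


theorem hFP_lemma (eps x u S : ℝ) (heps : eps = 1 ∨ eps = -1) (hS1 : 2*x*u ≤ S)
    (hO' : 0 < eps*x → -2*x*u < S) : 2*(eps*x)*|u| ≤ S := by
  have he2 : eps*eps = 1 := by rcases heps with rfl | rfl <;> norm_num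
  rcases le_or_gt 0 (eps*u) with hu | hu
  · have habs : |u| = eps*u := by
      rcases heps with rfl | rfl
      · rw [abs_of_nonneg (by linarith)]; ring
      · rw [abs_of_nonpos (by linarith)]; ring
    rw [habs]
    have h : 2*(eps*x)*(eps*u) = 2*x*u := by linear_combination (2*x*u)*he2
    rw [h]; exact hS1
  · have habs : |u| = -(eps*u) := by
      rcases heps with rfl | rfl
      · rw [abs_of_nonpos (by linarith)]; ring
      · rw [abs_of_nonneg (by linarith)]; ring
    rw [habs]
    have h : 2*(eps*x)*(-(eps*u)) = -2*x*u := by linear_combination (-2*x*u)*he2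
    rw [h]
    rcases le_or_gt (eps*x) 0 with hl | hl
    · have hxu : 0 ≤ x*u := by
        have h2 : x*u = (eps*x)*(eps*u) := by linear_combination (-(x*u))*he2
        rw [h2]; nlinarith [mul_nonneg (neg_nonneg.2 hl) (neg_nonneg.2 hu.le)]
      linarith
    · exact (hO' hl).le

theorem hSEQ_lemma (eps x u S m r' : ℝ) (heps : eps = 1 ∨ eps = -1) (hr' : 0 < r') (hm : 0 < m)
    (heq2 : x^2+1 = r'^2) (hm2 : m^2 = S^2+4*u^2) (hS1 : 2*x*u ≤ S)
    (hO' : 0 < eps*x → -2*x*u < S) (hequ : r'*S = (eps*x)*m) : S = 2*x*u := by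
  have he2 : eps*eps = 1 := by rcases heps with rfl | rfl <;> norm_num
  have h4 : S^2*r'^2 = x^2*(S^2+4*u^2) := by
    have h5 : (r'*S)^2 = ((eps*x)*m)^2 := by rw [hequ]
    have h6 : (eps*x)^2 = x^2 := by linear_combination x^2*he2
    calc S^2*r'^2 = (r'*S)^2 := by ring
    _ = ((eps*x)*m)^2 := h5
    _ = (eps*x)^2*m^2 := by ring
    _ = x^2*(S^2+4*u^2) := by rw [h6, hm2]
  have hSsq : S^2 = 4*x^2*u^2 := by linear_combination h4 + S^2*heq2
  have hfac : (S - 2*x*u)*(S + 2*x*u) = 0 := by linear_combination hSsq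
  rcases mul_eq_zero.1 hfac with h | h
  · linarith
  · have hxu : x*u ≤ 0 := by nlinarith
    rcases lt_or_eq_of_le hxu with hxu' | hxu'
    · exfalso
      rcases lt_trichotomy (eps*x) 0 with hl | hl | hl
      · have hS0 : r'*S < 0 := by rw [hequ]; exact mul_neg_of_neg_of_pos hl hm
        nlinarith
      · have hx0 : x = 0 := by rcases heps with rfl | rfl <;> linarith
        rw [hx0] at hxu'; simp at hxu'
      · have := hO' hl
        linarith
    · linarith [hxu']

/-- The maximum angle problem reduces to a quadratic equation: with
`A = (0,-1)`, `B = (0,1)`, there are `r' > 0` and `x` satisfying the system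
`2 Pₓ x = Pₓ² + P_y² − 2 r' r − r² − 1`, `x² + 1 = r'²`,
`(x − Pₓ)² + P_y² = (r + r')²`, where `r'` is the smallest such positive root,
and the maximizer `P*` of `∠ A Q B` over the disk is the intersection of the
boundary circle with segment `O P`, where `O = (x, 0)`. -/
theorem stmt3 (A B P Pstar : Pt) (r : ℝ) (hr : 0 < r)
    (hA0 : A 0 = 0) (hA1 : A 1 = -1) (hB0 : B 0 = 0) (hB1 : B 1 = 1)
    (hPx : P 0 ≠ 0)
    (hAP : dist A P > r) (hBP : dist B P > r)
    (hdisj : Disjoint (segment ℝ A B) (Metric.closedBall P r))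
    (hmem : Pstar ∈ Metric.closedBall P r)
    (hmax : ∀ Q ∈ Metric.closedBall P r, ∠ A Q B ≤ ∠ A Pstar B) :
    ∃ r' x : ℝ, 0 < r' ∧
      2 * P 0 * x = (P 0) ^ 2 + (P 1) ^ 2 - 2 * r' * r - r ^ 2 - 1 ∧
      x ^ 2 + 1 = r' ^ 2 ∧
      (x - P 0) ^ 2 + (P 1) ^ 2 = (r + r') ^ 2 ∧
      (∀ r'' x'' : ℝ, 0 < r'' →
        2 * P 0 * x'' = (P 0) ^ 2 + (P 1) ^ 2 - 2 * r'' * r - r ^ 2 - 1 →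
        x'' ^ 2 + 1 = r'' ^ 2 →
        (x'' - P 0) ^ 2 + (P 1) ^ 2 = (r + r'') ^ 2 → r' ≤ r'') ∧
      ∃ O : Pt, O 0 = x ∧ O 1 = 0 ∧
        dist Pstar P = r ∧ Pstar ∈ segment ℝ O P := by
  rw [Metric.mem_closedBall] at hmem
  -- squared-distance consequences of the hypotheses
  have hAP2 : r^2 < (P 0)^2 + (P 1 + 1)^2 := by
    have h := pow_lt_pow_left₀ hAP hr.le two_ne_zero
    rw [dist_sq' A P, hA0, hA1] at h
    linarith [h, (by ring : (0 - P 0)^2 + (-1 - P 1)^2 = (P 0)^2 + (P 1 + 1)^2)]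
  have hBP2 : r^2 < (P 0)^2 + (P 1 - 1)^2 := by
    have h := pow_lt_pow_left₀ hBP hr.le two_ne_zero
    rw [dist_sq' B P, hB0, hB1] at h
    linarith [h, (by ring : (0 - P 0)^2 + (1 - P 1)^2 = (P 0)^2 + (P 1 - 1)^2)]
  have hseg1 : |P 1| ≤ 1 → r^2 < (P 0)^2 := by
    intro habs
    obtain ⟨h1a, h1b⟩ := abs_le.1 habs
    have hZ : mk2 0 (P 1) ∈ segment ℝ A B := by
      refine ⟨(1 - P 1)/2, (1 + P 1)/2, by linarith, by linarith, by ring, ?_⟩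
      ext i
      fin_cases i <;>
        simp [PiLp.add_apply, PiLp.smul_apply, hA0, hA1, hB0, hB1] <;> ring
    have hnot : mk2 0 (P 1) ∉ Metric.closedBall P r := (Set.disjoint_left.1 hdisj) hZ
    rw [Metric.mem_closedBall, not_le] at hnot
    have h := pow_lt_pow_left₀ hnot hr.le two_ne_zero
    rw [dist_sq'] at h
    simp only [mk2_0, mk2_1] at h
    linarith [h, (by ring : (0 - P 0)^2 + (P 1 - P 1)^2 = (P 0)^2)]
  obtain ⟨r', x, hr'pos, heq1, heq2, hmin, hsign⟩ :=
    quad_sol (P 0) (P 1) r hPx hr hseg1 hBP2 hAP2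
  have heq1' : 2 * P 0 * x = (P 0)^2 + (P 1)^2 - 2*r'*r - r^2 - 1 := by linarith [heq1]
  have heq3 : (x - P 0)^2 + (P 1)^2 = (r + r')^2 := by linear_combination heq2 - heq1
  have hrr' : (0:ℝ) < r + r' := by linarith
  refine ⟨r', x, hr'pos, heq1', heq2, heq3, ?_, ?_⟩
  · intro r'' x'' h hx1 hx2 _
    exact hmin r'' x'' h (by linarith [hx1]) hx2
  -- geometry
  set O : Pt := mk2 x 0 with hOdef
  have hOP : dist O P = r + r' := by
    apply sqeq' dist_nonneg hrr'.le
    rw [dist_sq']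
    simp only [hOdef, mk2_0, mk2_1]
    linear_combination heq3
  obtain ⟨Tu, hTu⟩ : ∃ t : ℝ, t = (r*x + P 0*r')/(r+r') := ⟨_, rfl⟩
  obtain ⟨Tv, hTv⟩ : ∃ t : ℝ, t = (P 1*r')/(r+r') := ⟨_, rfl⟩
  have hTueq : Tu*(r+r') = r*x + P 0*r' := by rw [hTu]; field_simp
  have hTveq : Tv*(r+r') = P 1*r' := by rw [hTv]; field_simp
  clear hTu hTv
  set T : Pt := mk2 Tu Tv with hTdef
  have hTP : dist T P = r := by
    apply sqeq' dist_nonneg hr.le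
    rw [dist_sq']
    simp only [hTdef, mk2_0, mk2_1]
    have h : ((Tu - P 0)^2 + (Tv - P 1)^2)*(r+r')^2 = r^2*(r+r')^2 := by
      linear_combination (Tu*(r+r') - (r*x+P 0*r') + 2*r*(x - P 0))*hTueq +
        (Tv*(r+r') - P 1*r' - 2*P 1*r)*hTveq + r^2*heq3
    exact mul_right_cancel₀ (pow_ne_zero 2 (ne_of_gt hrr')) h
  have hTO2 : (Tu - x)^2 + Tv^2 = r'^2 := by
    have h : ((Tu - x)^2 + Tv^2)*(r+r')^2 = r'^2*(r+r')^2 := by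
      linear_combination (Tu*(r+r') - (r*x+P 0*r') + 2*r'*(P 0 - x))*hTueq +
        (Tv*(r+r') - P 1*r' + 2*P 1*r')*hTveq + r'^2*heq3
    exact mul_right_cancel₀ (pow_ne_zero 2 (ne_of_gt hrr')) h
  -- epsilon
  obtain ⟨ε, hεval, hεp⟩ : ∃ e : ℝ, (e = 1 ∨ e = -1) ∧ 0 < e * P 0 := by
    rcases hPx.lt_or_gt with h | h
    · exact ⟨-1, Or.inr rfl, by linarith⟩
    · exact ⟨1, Or.inl rfl, by linarith⟩
  have hε2 : ε * ε = 1 := by rcases hεval with rfl | rfl <;> norm_num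
  have hTusign : 0 < ε * Tu := by
    have hc : 0 < ε * (r*x + P 0*r') := by
      rcases mul_pos_iff.1 hsign with ⟨h1, h2⟩ | ⟨h1, h2⟩ <;>
        rcases hεval with rfl | rfl <;> linarith
    have h5 : ε*Tu*(r+r') = ε*(r*x+P 0*r') := by linear_combination ε*hTueq
    exact pos_of_mul_eq _ _ _ h5 hrr' hc
  -- angle at T
  have hmemT : T ∈ Metric.closedBall P r := by
    rw [Metric.mem_closedBall, hTP]
  have hangle := hmax T hmemT
  have hcosle : Real.cos (∠ A Pstar B) ≤ Real.cos (∠ A T B) :=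
    Real.cos_le_cos_of_nonneg_of_le_pi (angle_nonneg A T B) (angle_le_pi A Pstar B) hangle
  -- distance positivity
  have htriA := dist_triangle A Pstar P
  have htriB := dist_triangle B Pstar P
  have hdA : 0 < dist A Pstar := by linarith
  have hdB : 0 < dist B Pstar := by linarith
  -- ST
  have hST : Tu^2 + Tv^2 - 1 = 2*x*Tu := by linear_combination hTO2 - heq2
  -- product of norms at T
  have hmT : dist A T * dist B T = 2*(ε*Tu)*r' := by
    apply sqeq' (mul_nonneg dist_nonneg dist_nonneg) (by positivity)
    rw [mul_pow, dist_sq' A T, dist_sq' B T]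
    simp only [hTdef, mk2_0, mk2_1, hA0, hA1, hB0, hB1]
    linear_combination (Tu^2+Tv^2-1+2*x*Tu)*hST + 4*Tu^2*heq2 + (-4*Tu^2*r'^2)*hε2
  have hcosT : Real.cos (∠ A T B) = (ε*x)/r' := by
    rw [cos_coord']
    simp only [hTdef, mk2_0, mk2_1, hA0, hA1, hB0, hB1]
    rw [hmT, div_eq_div_iff (by positivity) (by positivity)]
    linear_combination r'*hST + (-2*x*Tu*r')*hε2
  -- cos at Pstar
  have hnum : (A 0 - Pstar 0)*(B 0 - Pstar 0) + (A 1 - Pstar 1)*(B 1 - Pstar 1)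
      = (Pstar 0)^2 + (Pstar 1)^2 - 1 := by
    rw [hA0, hA1, hB0, hB1]; ring
  have hcosPs : Real.cos (∠ A Pstar B)
      = ((Pstar 0)^2 + (Pstar 1)^2 - 1)/(dist A Pstar * dist B Pstar) := by
    rw [cos_coord', hnum]
  have hm2 : (dist A Pstar * dist B Pstar)^2
      = ((Pstar 0)^2 + (Pstar 1)^2 - 1)^2 + 4*(Pstar 0)^2 := by
    rw [mul_pow, dist_sq' A Pstar, dist_sq' B Pstar, hA0, hA1, hB0, hB1]
    ring
  have hmpos : 0 < dist A Pstar * dist B Pstar := mul_pos hdA hdB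
  -- triangle bound with O
  have htriO := dist_triangle O Pstar P
  rw [hOP] at htriO
  have hOPs : r' ≤ dist O Pstar := by linarith
  have hOPs2 : r'^2 ≤ (Pstar 0 - x)^2 + (Pstar 1)^2 := by
    have h := dist_sq' O Pstar
    simp only [hOdef, mk2_0, mk2_1] at h
    have h2 := pow_le_pow_left₀ hr'pos.le hOPs 2
    rw [h] at h2
    linarith [h2, (by ring : (x - Pstar 0)^2 + (0 - Pstar 1)^2 = (Pstar 0 - x)^2 + (Pstar 1)^2)]
  have hS1 : 2*x*(Pstar 0) ≤ (Pstar 0)^2 + (Pstar 1)^2 - 1 := by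
    linarith [hOPs2, heq2, (by ring : (Pstar 0 - x)^2 = (Pstar 0)^2 - 2*x*(Pstar 0) + x^2)]
  -- O' strict bound, valid when ε*x > 0
  have hO'bound : 0 < ε*x → -2*x*(Pstar 0) < (Pstar 0)^2 + (Pstar 1)^2 - 1 := by
    intro hlx
    have hpx : 0 < P 0 * x := by
      have h : P 0 * x = (ε*P 0)*(ε*x) := by linear_combination (-(P 0 * x))*hε2
      rw [h]; exact mul_pos hεp hlx
    have hO'P2 : (dist (mk2 (-x) 0) P)^2 = (r+r')^2 + 4*(P 0*x) := by
      rw [dist_sq']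
      simp only [mk2_0, mk2_1]
      linear_combination heq3
    have hO'P : r + r' < dist (mk2 (-x) 0) P := by
      apply lt_of_sq_lt _ _ dist_nonneg hrr'.le
      linarith [hO'P2, hpx]
    have htriO' := dist_triangle (mk2 (-x) 0) Pstar P
    have hO'Ps : r' < dist (mk2 (-x) 0) Pstar := by linarith
    have hO'Ps2 : (dist (mk2 (-x) 0) Pstar)^2 = (Pstar 0 + x)^2 + (Pstar 1)^2 := by
      rw [dist_sq']; simp only [mk2_0, mk2_1]; ring
    have h6 := sq_lt_of_lt _ _ hr'pos.le hO'Ps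
    rw [hO'Ps2] at h6
    linarith [h6, heq2, (by ring : (Pstar 0 + x)^2 = (Pstar 0)^2 + 2*x*(Pstar 0) + x^2)]
  have hFP : 2*(ε*x)*|Pstar 0| ≤ (Pstar 0)^2 + (Pstar 1)^2 - 1 :=
    hFP_lemma ε x (Pstar 0) _ hεval hS1 hO'bound
  -- cos comparison gives equality
  have hrl : r'^2 = (ε*x)^2+1 := by linear_combination (-1)*heq2 + (-(x^2))*hε2
  have hcosge : (ε*x)/r' ≤ ((Pstar 0)^2 + (Pstar 1)^2 - 1)/(dist A Pstar * dist B Pstar) := by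
    rw [div_le_div_iff₀ hr'pos hmpos]
    have := cosbound' (ε*x) r' ((Pstar 0)^2 + (Pstar 1)^2 - 1)
      (dist A Pstar * dist B Pstar) (|Pstar 0|) hr'pos hrl hmpos.le
      (by rw [hm2, sq_abs]) (abs_nonneg _) hFP
    linarith [this]
  have hequ : r'*((Pstar 0)^2 + (Pstar 1)^2 - 1) = (ε*x)*(dist A Pstar * dist B Pstar) := by
    have h1 : ((Pstar 0)^2 + (Pstar 1)^2 - 1)/(dist A Pstar * dist B Pstar) = (ε*x)/r' := by
      apply le_antisymm
      · rw [← hcosPs, ← hcosT]; exact hcosle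
      · exact hcosge
    have h2 := (div_eq_div_iff hmpos.ne' hr'pos.ne').1 h1
    linarith [h2]
  have hSEQ : (Pstar 0)^2 + (Pstar 1)^2 - 1 = 2*x*(Pstar 0) := by
    have h := hSEQ_lemma ε x (Pstar 0) ((Pstar 0)^2 + (Pstar 1)^2 - 1)
      (dist A Pstar * dist B Pstar) r' hεval hr'pos hmpos heq2 hm2 hS1 hO'bound hequ
    linarith [h]
  -- distances equalities
  have hE1 : (Pstar 0 - x)^2 + (Pstar 1)^2 = r'^2 := by
    linear_combination hSEQ + heq2
  have hOPse : dist O Pstar = r' := by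
    apply sqeq' dist_nonneg hr'pos.le
    rw [dist_sq']
    simp only [hOdef, mk2_0, mk2_1]
    linear_combination hE1
  have hPsP : dist Pstar P = r := by
    have h1 : r ≤ dist Pstar P := by
      have := dist_triangle O Pstar P
      rw [hOP, hOPse] at this
      linarith
    linarith [hmem]
  have hE2 : (Pstar 0 - P 0)^2 + (Pstar 1 - P 1)^2 = r^2 := by
    have h := dist_sq' Pstar P
    rw [hPsP] at h
    linarith [h]
  -- segment membership
  have hAB : (Pstar 0*(r+r') - (r*x+P 0*r'))^2 + (Pstar 1*(r+r') - P 1*r')^2 = 0 := by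
    linear_combination (r*(r+r'))*hE1 + (r'*(r+r'))*hE2 + (-(r*r'))*heq3
  obtain ⟨hA0', hB0'⟩ := sq_add_sq_eq_zero _ _ hAB
  refine ⟨O, rfl, rfl, hPsP, ⟨r/(r+r'), r'/(r+r'), by positivity, by positivity, by field_simp, ?_⟩⟩
  ext i
  fin_cases i
  · show r/(r+r') * O 0 + r'/(r+r') * P 0 = Pstar 0
    simp only [hOdef, mk2_0]
    rw [div_mul_eq_mul_div, div_mul_eq_mul_div, ← add_div, div_eq_iff hrr'.ne']
    linarith [hA0', (by ring : Pstar 0*(r+r') = (r+r')*Pstar 0)]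
  · show r/(r+r') * O 1 + r'/(r+r') * P 1 = Pstar 1
    simp only [hOdef, mk2_1]
    rw [div_mul_eq_mul_div, div_mul_eq_mul_div, ← add_div, div_eq_iff hrr'.ne']
    linarith [hB0', (by ring : Pstar 1*(r+r') = (r+r')*Pstar 1)]
end

section
/- Let ABC be a triangle all of whose angles are strictly less than 120°. Then there exists a unique point F inside the triangle such that ∠AFB = ∠BFC = ∠CFA = 120°. -/
open EuclideanGeometry Real RealInnerProductSpace

set_option maxHeartbeats 1000000

lemma fermat_norm_sub_le (x h : Pt) (hx : 0 < ‖x‖) :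
    ‖x - h‖ ≤ ‖x‖ - ⟪x, h⟫ / ‖x‖ + ‖h‖ ^ 2 / (2 * ‖x‖) := by
  have h1 : ‖x - h‖ ^ 2 = ‖x‖ ^ 2 - 2 * ⟪x, h⟫ + ‖h‖ ^ 2 := norm_sub_sq_real x h
  obtain ⟨p, hp⟩ : ∃ p : ℝ, ⟪x, h⟫ = p := ⟨_, rfl⟩
  rw [hp] at h1 ⊢
  rw [← sub_nonneg]
  have key : ‖x‖ - p / ‖x‖ + ‖h‖ ^ 2 / (2 * ‖x‖) - ‖x - h‖
      = (‖x - h‖ - ‖x‖) ^ 2 / (2 * ‖x‖) := by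
    field_simp
    nlinarith [h1]
  rw [key]
  positivity



lemma fermat_step (X A d : Pt) (hX : X ≠ A) {t : ℝ} (ht : 0 < t) :
    dist X (A + t • d) ≤ ‖X - A‖ - t * ⟪‖X - A‖⁻¹ • (X - A), d⟫
      + t ^ 2 * (‖d‖ ^ 2 / (2 * ‖X - A‖)) := by
  have hx : 0 < ‖X - A‖ := by simpa [sub_eq_zero] using hX
  have h1 : dist X (A + t • d) = ‖(X - A) - t • d‖ := by
    rw [dist_eq_norm, sub_add_eq_sub_sub]
  have h2 := fermat_norm_sub_le (X - A) (t • d) hx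
  rw [h1]
  refine h2.trans (le_of_eq ?_)
  rw [real_inner_smul_right, real_inner_smul_left, norm_smul, Real.norm_eq_abs, abs_of_pos ht]
  obtain ⟨p, hp⟩ : ∃ p : ℝ, ⟪X - A, d⟫ = p := ⟨_, rfl⟩
  rw [hp]
  field_simp

/-- At a global minimizer of the sum of distances (distinct from the vertices),
the sum of unit vectors toward the vertices vanishes. -/
lemma fermat_grad_zero (A B C F : Pt) (hA : A ≠ F) (hB : B ≠ F) (hC : C ≠ F)
    (hmin : ∀ x, dist A F + dist B F + dist C F ≤ dist A x + dist B x + dist C x) :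
    ‖A - F‖⁻¹ • (A - F) + ‖B - F‖⁻¹ • (B - F) + ‖C - F‖⁻¹ • (C - F) = 0 := by
  by_contra hg
  obtain ⟨g, hgdef⟩ : ∃ g : Pt, ‖A - F‖⁻¹ • (A - F) + ‖B - F‖⁻¹ • (B - F) + ‖C - F‖⁻¹ • (C - F) = g :=
    ⟨_, rfl⟩
  rw [hgdef] at hg
  have ha : 0 < ‖A - F‖ := by simpa [sub_eq_zero] using hA
  have hb : 0 < ‖B - F‖ := by simpa [sub_eq_zero] using hB
  have hc : 0 < ‖C - F‖ := by simpa [sub_eq_zero] using hC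
  have hgn : 0 < ‖g‖ := by simpa [norm_pos_iff] using hg
  obtain ⟨c, hcdef⟩ : ∃ c : ℝ,
      c = ‖g‖ ^ 2 / (2 * ‖A - F‖) + ‖g‖ ^ 2 / (2 * ‖B - F‖) + ‖g‖ ^ 2 / (2 * ‖C - F‖) := ⟨_, rfl⟩
  have hc0 : 0 < c := by rw [hcdef]; positivity
  obtain ⟨t, htdef⟩ : ∃ t : ℝ, t = ‖g‖ ^ 2 / (c + 1) := ⟨_, rfl⟩
  have ht : 0 < t := by rw [htdef]; positivity
  have hkey : ∀ (X : Pt), X ≠ F →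
      dist X (F + t • g) ≤ ‖X - F‖ - t * ⟪‖X - F‖⁻¹ • (X - F), g⟫
        + t ^ 2 * (‖g‖ ^ 2 / (2 * ‖X - F‖)) := fun X hX => fermat_step X F g hX ht
  have hsum : ⟪‖A - F‖⁻¹ • (A - F), g⟫ + ⟪‖B - F‖⁻¹ • (B - F), g⟫ + ⟪‖C - F‖⁻¹ • (C - F), g⟫
      = ‖g‖ ^ 2 := by
    rw [← real_inner_self_eq_norm_sq, ← hgdef, ← inner_add_left, ← inner_add_left]
  have hsum' : t * ⟪‖A - F‖⁻¹ • (A - F), g⟫ + t * ⟪‖B - F‖⁻¹ • (B - F), g⟫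
      + t * ⟪‖C - F‖⁻¹ • (C - F), g⟫ = t * ‖g‖ ^ 2 := by
    rw [← hsum]; ring
  have h3 := hmin (F + t • g)
  have h4 := hkey A hA
  have h5 := hkey B hB
  have h6 := hkey C hC
  have hdA : dist A F = ‖A - F‖ := dist_eq_norm A F
  have hdB : dist B F = ‖B - F‖ := dist_eq_norm B F
  have hdC : dist C F = ‖C - F‖ := dist_eq_norm C F
  have htc : t * c < ‖g‖ ^ 2 := by
    rw [htdef, div_mul_eq_mul_div, div_lt_iff₀ (by positivity)]
    nlinarith
  have h9 : t ^ 2 * (‖g‖ ^ 2 / (2 * ‖A - F‖)) + t ^ 2 * (‖g‖ ^ 2 / (2 * ‖B - F‖))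
      + t ^ 2 * (‖g‖ ^ 2 / (2 * ‖C - F‖)) < t * ‖g‖ ^ 2 := by
    have h10 : t ^ 2 * (‖g‖ ^ 2 / (2 * ‖A - F‖)) + t ^ 2 * (‖g‖ ^ 2 / (2 * ‖B - F‖))
        + t ^ 2 * (‖g‖ ^ 2 / (2 * ‖C - F‖)) = t * (t * c) := by rw [hcdef]; ring
    rw [h10]
    exact (mul_lt_mul_of_pos_left htc ht)
  linarith

lemma fermat_vertex_decrease (A X Y : Pt) (hX : X ≠ A) (hY : Y ≠ A)
    (hang : ∠ X A Y < 2 * π / 3) :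
    ∃ p : Pt, dist A p + dist X p + dist Y p < dist X A + dist Y A := by
  have hx : 0 < ‖X - A‖ := by simpa [sub_eq_zero] using hX
  have hy : 0 < ‖Y - A‖ := by simpa [sub_eq_zero] using hY
  obtain ⟨u, hu⟩ : ∃ u : Pt, ‖X - A‖⁻¹ • (X - A) = u := ⟨_, rfl⟩
  obtain ⟨v, hv⟩ : ∃ v : Pt, ‖Y - A‖⁻¹ • (Y - A) = v := ⟨_, rfl⟩
  have hnu : ‖u‖ = 1 := by
    rw [← hu, norm_smul, norm_inv, norm_norm, inv_mul_cancel₀ (ne_of_gt hx)]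
  have hnv : ‖v‖ = 1 := by
    rw [← hv, norm_smul, norm_inv, norm_norm, inv_mul_cancel₀ (ne_of_gt hy)]
  have hcos2 : Real.cos (2 * π / 3) = -(1/2) := by
    rw [show (2 * π / 3 : ℝ) = π - π / 3 by ring, Real.cos_pi_sub, Real.cos_pi_div_three]
  have hcoslt : Real.cos (2 * π / 3) < Real.cos (∠ X A Y) :=
    Real.strictAntiOn_cos ⟨EuclideanGeometry.angle_nonneg X A Y, EuclideanGeometry.angle_le_pi X A Y⟩
      ⟨by positivity, by linarith [Real.pi_pos]⟩ hang
  have hcoseq : Real.cos (∠ X A Y) = ⟪u, v⟫ := by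
    rw [EuclideanGeometry.angle, InnerProductGeometry.cos_angle, ← hu, ← hv,
      real_inner_smul_left, real_inner_smul_right]
    simp only [vsub_eq_sub]
    field_simp
  have huv : -(1/2) < ⟪u, v⟫ := by rw [← hcos2, ← hcoseq]; exact hcoslt
  obtain ⟨d, hd⟩ : ∃ d : Pt, u + v = d := ⟨_, rfl⟩
  have hnd2 : ‖d‖ ^ 2 = 2 + 2 * ⟪u, v⟫ := by
    rw [← hd, norm_add_sq_real, hnu, hnv]; ring
  have hnd : 1 < ‖d‖ := by nlinarith [norm_nonneg d]
  obtain ⟨c, hcdef⟩ : ∃ c : ℝ,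
      c = ‖d‖ ^ 2 / (2 * ‖X - A‖) + ‖d‖ ^ 2 / (2 * ‖Y - A‖) := ⟨_, rfl⟩
  have hc0 : 0 < c := by rw [hcdef]; positivity
  obtain ⟨t, htdef⟩ : ∃ t : ℝ, t = (‖d‖ ^ 2 - ‖d‖) / (c + 1) := ⟨_, rfl⟩
  have hdd : 0 < ‖d‖ ^ 2 - ‖d‖ := by nlinarith
  have ht : 0 < t := by rw [htdef]; positivity
  refine ⟨A + t • d, ?_⟩
  have h1 : dist A (A + t • d) = t * ‖d‖ := by
    rw [dist_eq_norm]
    simp [norm_smul, abs_of_pos ht]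
  have h2 := fermat_step X A d hX ht
  have h3 := fermat_step Y A d hY ht
  rw [hu] at h2
  rw [hv] at h3
  have hsum : ⟪u, d⟫ + ⟪v, d⟫ = ‖d‖ ^ 2 := by
    rw [← real_inner_self_eq_norm_sq, ← hd, ← inner_add_left]
  have hsum' : t * ⟪u, d⟫ + t * ⟪v, d⟫ = t * ‖d‖ ^ 2 := by rw [← hsum]; ring
  have htc : t * c < ‖d‖ ^ 2 - ‖d‖ := by
    rw [htdef, div_mul_eq_mul_div, div_lt_iff₀ (by positivity)]
    nlinarith
  have h9 : t ^ 2 * (‖d‖ ^ 2 / (2 * ‖X - A‖)) + t ^ 2 * (‖d‖ ^ 2 / (2 * ‖Y - A‖))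
      < t * (‖d‖ ^ 2 - ‖d‖) := by
    have h10 : t ^ 2 * (‖d‖ ^ 2 / (2 * ‖X - A‖)) + t ^ 2 * (‖d‖ ^ 2 / (2 * ‖Y - A‖))
        = t * (t * c) := by rw [hcdef]; ring
    rw [h10]
    exact mul_lt_mul_of_pos_left htc ht
  have hdX : dist X A = ‖X - A‖ := dist_eq_norm X A
  have hdY : dist Y A = ‖Y - A‖ := dist_eq_norm Y A
  nlinarith [h1, h2, h3, hsum', h9]

lemma fermat_exists_min (A B C : Pt) :
    ∃ F : Pt, ∀ x, dist A F + dist B F + dist C F ≤ dist A x + dist B x + dist C x := by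
  have hR : (0:ℝ) ≤ dist B A + dist C A := by positivity
  have hcpt : IsCompact (Metric.closedBall A (dist B A + dist C A)) :=
    isCompact_closedBall A _
  have hAmem : A ∈ Metric.closedBall A (dist B A + dist C A) := by
    simp [Metric.mem_closedBall, hR]
  have hcont : ContinuousOn (fun x : Pt => dist A x + dist B x + dist C x)
      (Metric.closedBall A (dist B A + dist C A)) :=
    (((continuous_const.dist continuous_id).add (continuous_const.dist continuous_id)).add
      (continuous_const.dist continuous_id)).continuousOn
  obtain ⟨F, hF, hFmin⟩ := hcpt.exists_isMinOn ⟨A, hAmem⟩ hcont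
  refine ⟨F, fun x => ?_⟩
  by_cases hx : x ∈ Metric.closedBall A (dist B A + dist C A)
  · exact hFmin hx
  · have h1 : dist A F + dist B F + dist C F ≤ dist A A + dist B A + dist C A := hFmin hAmem
    have h2 : dist B A + dist C A < dist x A := by
      simpa [Metric.mem_closedBall] using hx
    have h3 : dist x A = dist A x := dist_comm x A
    have h4 : (0:ℝ) ≤ dist B x := dist_nonneg
    have h5 : (0:ℝ) ≤ dist C x := dist_nonneg
    simp only [dist_self] at h1
    linarith

lemma fermat_unit_sum_zero {u v w : Pt} (hu : ‖u‖ = 1) (hv : ‖v‖ = 1) (hw : ‖w‖ = 1)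
    (h : u + v + w = 0) : ⟪u, v⟫ = -(1/2) ∧ ⟪v, w⟫ = -(1/2) ∧ ⟪w, u⟫ = -(1/2) := by
  have huu : ⟪u, u⟫ = 1 := by rw [real_inner_self_eq_norm_sq, hu]; norm_num
  have hvv : ⟪v, v⟫ = 1 := by rw [real_inner_self_eq_norm_sq, hv]; norm_num
  have hww : ⟪w, w⟫ = 1 := by rw [real_inner_self_eq_norm_sq, hw]; norm_num
  have h1 : ⟪u, u + v + w⟫ = 0 := by rw [h, inner_zero_right]
  have h2 : ⟪v, u + v + w⟫ = 0 := by rw [h, inner_zero_right]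
  have h3 : ⟪w, u + v + w⟫ = 0 := by rw [h, inner_zero_right]
  rw [inner_add_right, inner_add_right] at h1 h2 h3
  have c1 : ⟪v, u⟫ = ⟪u, v⟫ := (real_inner_comm v u).symm
  have c2 : ⟪w, v⟫ = ⟪v, w⟫ := (real_inner_comm w v).symm
  have c3 : ⟪u, w⟫ = ⟪w, u⟫ := (real_inner_comm u w).symm
  refine ⟨by linarith, by linarith, by linarith⟩

lemma fermat_unit_sum_zero' {u v w : Pt} (hu : ‖u‖ = 1) (hv : ‖v‖ = 1) (hw : ‖w‖ = 1)
    (h1 : ⟪u, v⟫ = -(1/2)) (h2 : ⟪v, w⟫ = -(1/2)) (h3 : ⟪w, u⟫ = -(1/2)) :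
    u + v + w = 0 := by
  have key : ‖u + v + w‖ ^ 2 = 0 := by
    have h3' : ⟪u, w⟫ = -(1/2) := (real_inner_comm w u).trans h3
    rw [norm_add_sq_real, norm_add_sq_real, hu, hv, hw, inner_add_left]
    rw [h1, h2, h3']
    norm_num
  have := (pow_eq_zero_iff (n := 2) (by norm_num)).mp key
  simpa [norm_eq_zero] using this

lemma fermat_cos_angle (X A Y : Pt) (hX : X ≠ A) (hY : Y ≠ A) :
    Real.cos (∠ X A Y) = ⟪‖X - A‖⁻¹ • (X - A), ‖Y - A‖⁻¹ • (Y - A)⟫ := by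
  have hx : 0 < ‖X - A‖ := by simpa [sub_eq_zero] using hX
  have hy : 0 < ‖Y - A‖ := by simpa [sub_eq_zero] using hY
  rw [EuclideanGeometry.angle, InnerProductGeometry.cos_angle,
    real_inner_smul_left, real_inner_smul_right]
  simp only [vsub_eq_sub]
  field_simp

lemma fermat_cos_two_pi_div_three : Real.cos (2 * π / 3) = -(1/2) := by
  rw [show (2 * π / 3 : ℝ) = π - π / 3 by ring, Real.cos_pi_sub, Real.cos_pi_div_three]

lemma fermat_angle_eq_of_cos (X A Y : Pt) (h : Real.cos (∠ X A Y) = -(1/2)) :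
    ∠ X A Y = 2 * π / 3 := by
  have hmem : ∠ X A Y ∈ Set.Icc 0 π :=
    ⟨EuclideanGeometry.angle_nonneg X A Y, EuclideanGeometry.angle_le_pi X A Y⟩
  have hmem2 : 2 * π / 3 ∈ Set.Icc (0:ℝ) π := ⟨by positivity, by linarith [Real.pi_pos]⟩
  exact Real.injOn_cos hmem hmem2 (h.trans fermat_cos_two_pi_div_three.symm)

lemma fermat_mem_interior (A B C F : Pt) (hncol : ¬ Collinear ℝ ({A, B, C} : Set Pt))
    (hA : A ≠ F) (hB : B ≠ F) (hC : C ≠ F)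
    (hg : ‖A - F‖⁻¹ • (A - F) + ‖B - F‖⁻¹ • (B - F) + ‖C - F‖⁻¹ • (C - F) = 0) :
    F ∈ interior (convexHull ℝ ({A, B, C} : Set Pt)) := by
  have ha : 0 < ‖A - F‖ := by simpa [sub_eq_zero] using hA
  have hb : 0 < ‖B - F‖ := by simpa [sub_eq_zero] using hB
  have hc : 0 < ‖C - F‖ := by simpa [sub_eq_zero] using hC
  have hs : 0 < ‖A - F‖⁻¹ + ‖B - F‖⁻¹ + ‖C - F‖⁻¹ := by positivity
  have hind : AffineIndependent ℝ ![A, B, C] :=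
    affineIndependent_iff_not_collinear_set.mpr hncol
  have htot : affineSpan ℝ (Set.range ![A, B, C]) = ⊤ := by
    rw [hind.affineSpan_eq_top_iff_card_eq_finrank_add_one]
    simp [finrank_euclideanSpace_fin]
  let b : AffineBasis (Fin 3) ℝ Pt := ⟨![A, B, C], hind, htot⟩
  have hrange : Set.range ⇑b = ({A, B, C} : Set Pt) := by
    show Set.range ![A, B, C] = _
    simp only [Matrix.range_cons, Matrix.range_empty, Set.union_empty, Set.union_insert,
      Set.union_singleton]
    ext x
    simp [or_comm, or_left_comm]
  obtain ⟨s, hsdef⟩ : ∃ s : ℝ, s = ‖A - F‖⁻¹ + ‖B - F‖⁻¹ + ‖C - F‖⁻¹ := ⟨_, rfl⟩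
  have hs0 : 0 < s := hsdef ▸ hs
  set w : Fin 3 → ℝ := ![s⁻¹ * ‖A - F‖⁻¹, s⁻¹ * ‖B - F‖⁻¹, s⁻¹ * ‖C - F‖⁻¹] with hwdef
  have hw : (Finset.univ : Finset (Fin 3)).sum w = 1 := by
    simp [hwdef, Fin.sum_univ_three]
    rw [← mul_add, ← mul_add, ← hsdef, inv_mul_cancel₀ (ne_of_gt hs0)]
  have hlin : ‖A - F‖⁻¹ • A + ‖B - F‖⁻¹ • B + ‖C - F‖⁻¹ • C = s • F := by
    have h1 : ‖A - F‖⁻¹ • (A - F) = ‖A - F‖⁻¹ • A - ‖A - F‖⁻¹ • F := smul_sub _ _ _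
    have h2 : ‖B - F‖⁻¹ • (B - F) = ‖B - F‖⁻¹ • B - ‖B - F‖⁻¹ • F := smul_sub _ _ _
    have h3 : ‖C - F‖⁻¹ • (C - F) = ‖C - F‖⁻¹ • C - ‖C - F‖⁻¹ • F := smul_sub _ _ _
    rw [h1, h2, h3] at hg
    rw [hsdef, add_smul, add_smul]
    rw [← sub_eq_zero, ← hg]
    abel
  have hFw : (Finset.univ : Finset (Fin 3)).affineCombination ℝ ![A, B, C] w = F := by
    rw [Finset.univ.affineCombination_eq_linear_combination ![A, B, C] w hw]
    rw [Fin.sum_univ_three]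
    show (s⁻¹ * ‖A - F‖⁻¹) • A + (s⁻¹ * ‖B - F‖⁻¹) • B + (s⁻¹ * ‖C - F‖⁻¹) • C = F
    rw [mul_smul, mul_smul, mul_smul, ← smul_add, ← smul_add, hlin, smul_smul,
      inv_mul_cancel₀ (ne_of_gt hs0), one_smul]
  rw [← hrange, b.interior_convexHull]
  intro i
  have hcoord : b.coord i F = w i := by
    rw [← hFw]
    exact b.coord_apply_combination_of_mem (Finset.mem_univ i) hw
  rw [hcoord]
  fin_cases i
  · show 0 < s⁻¹ * ‖A - F‖⁻¹; positivity
  · show 0 < s⁻¹ * ‖B - F‖⁻¹; positivity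
  · show 0 < s⁻¹ * ‖C - F‖⁻¹; positivity


lemma fermat_pair (x y : Pt) (hx : 0 < ‖x‖) (hy : 0 < ‖y‖) :
    ‖x‖ * ‖y‖ * (-(⟪‖x‖⁻¹ • x - ‖y‖⁻¹ • y, y - x⟫)) =
      (‖x‖ * ‖y‖ - ⟪x, y⟫) * (‖x‖ + ‖y‖) := by
  simp only [inner_sub_left, inner_sub_right, real_inner_smul_left]
  rw [real_inner_self_eq_norm_sq x, real_inner_self_eq_norm_sq y, real_inner_comm y x]
  obtain ⟨p, hp⟩ : ∃ p : ℝ, ⟪y, x⟫ = p := ⟨_, rfl⟩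
  rw [hp]
  field_simp
  ring

lemma fermat_grad_unique (A B C F G : Pt) (hncol : ¬ Collinear ℝ ({A, B, C} : Set Pt))
    (hAF : A ≠ F) (hBF : B ≠ F) (hCF : C ≠ F) (hAG : A ≠ G) (hBG : B ≠ G) (hCG : C ≠ G)
    (hgF : ‖A - F‖⁻¹ • (A - F) + ‖B - F‖⁻¹ • (B - F) + ‖C - F‖⁻¹ • (C - F) = 0)
    (hgG : ‖A - G‖⁻¹ • (A - G) + ‖B - G‖⁻¹ • (B - G) + ‖C - G‖⁻¹ • (C - G) = 0) :
    F = G := by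
  by_contra hne
  have key : ∀ P : Pt, P ≠ F → P ≠ G →
      ⟪‖P - F‖⁻¹ • (P - F) - ‖P - G‖⁻¹ • (P - G), F - G⟫ ≤ 0 ∧
      (⟪‖P - F‖⁻¹ • (P - F) - ‖P - G‖⁻¹ • (P - G), F - G⟫ = 0 →
        ∃ r : ℝ, P = r • (G - F) + F) := by
    intro P hPF hPG
    have hx : 0 < ‖P - F‖ := by simpa [sub_eq_zero] using hPF
    have hy : 0 < ‖P - G‖ := by simpa [sub_eq_zero] using hPG
    have hFG : F - G = (P - G) - (P - F) := by abel
    have he : ‖P - F‖ * ‖P - G‖ *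
        (-(⟪‖P - F‖⁻¹ • (P - F) - ‖P - G‖⁻¹ • (P - G), F - G⟫)) =
        (‖P - F‖ * ‖P - G‖ - ⟪P - F, P - G⟫) * (‖P - F‖ + ‖P - G‖) := by
      rw [hFG]
      exact fermat_pair (P - F) (P - G) hx hy
    have hcs := real_inner_le_norm (P - F) (P - G)
    constructor
    · nlinarith [mul_pos hx hy]
    · intro h0
      have heq : ⟪P - F, P - G⟫ = ‖P - F‖ * ‖P - G‖ := by nlinarith [mul_pos hx hy]
      have hsm : ‖P - G‖ • (P - F) = ‖P - F‖ • (P - G) := inner_eq_norm_mul_iff_real.mp heq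
      by_cases hxy : ‖P - F‖ = ‖P - G‖
      · exfalso
        rw [← hxy] at hsm
        have hPFG : P - F = P - G := smul_right_injective Pt (ne_of_gt hx) hsm
        have : F = G := by rw [← sub_sub_cancel P F, hPFG, sub_sub_cancel]
        exact hne this
      · refine ⟨‖P - F‖ / (‖P - F‖ - ‖P - G‖), ?_⟩
        have hne2 : ‖P - F‖ - ‖P - G‖ ≠ 0 := sub_ne_zero.mpr hxy
        have hGF : G - F = (P - F) - (P - G) := by abel
        have hcancel : (‖P - F‖ - ‖P - G‖) • (P - F)
            = (‖P - F‖ - ‖P - G‖) • ((‖P - F‖ / (‖P - F‖ - ‖P - G‖)) • (G - F)) := by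
          have h1 : (‖P - F‖ - ‖P - G‖) • ((‖P - F‖ / (‖P - F‖ - ‖P - G‖)) • (G - F))
              = ‖P - F‖ • (G - F) := by rw [smul_smul, mul_div_cancel₀ _ hne2]
          have h2 : ‖P - F‖ • (G - F) = ‖P - F‖ • (P - F) - ‖P - F‖ • (P - G) := by
            rw [hGF, smul_sub]
          have h3 : (‖P - F‖ - ‖P - G‖) • (P - F)
              = ‖P - F‖ • (P - F) - ‖P - G‖ • (P - F) := sub_smul _ _ _
          rw [h1, h2, h3, hsm]
        have := smul_right_injective Pt hne2 hcancel
        rw [← this]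
        abel
  have hzA := key A hAF hAG
  have hzB := key B hBF hBG
  have hzC := key C hCF hCG
  have hsumzero : ⟪‖A - F‖⁻¹ • (A - F) - ‖A - G‖⁻¹ • (A - G), F - G⟫ +
      ⟪‖B - F‖⁻¹ • (B - F) - ‖B - G‖⁻¹ • (B - G), F - G⟫ +
      ⟪‖C - F‖⁻¹ • (C - F) - ‖C - G‖⁻¹ • (C - G), F - G⟫ = 0 := by
    rw [← inner_add_left, ← inner_add_left]
    have hX : (‖A - F‖⁻¹ • (A - F) - ‖A - G‖⁻¹ • (A - G)) +
        (‖B - F‖⁻¹ • (B - F) - ‖B - G‖⁻¹ • (B - G)) +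
        (‖C - F‖⁻¹ • (C - F) - ‖C - G‖⁻¹ • (C - G)) = 0 := by
      have : (‖A - F‖⁻¹ • (A - F) - ‖A - G‖⁻¹ • (A - G)) +
          (‖B - F‖⁻¹ • (B - F) - ‖B - G‖⁻¹ • (B - G)) +
          (‖C - F‖⁻¹ • (C - F) - ‖C - G‖⁻¹ • (C - G)) =
          (‖A - F‖⁻¹ • (A - F) + ‖B - F‖⁻¹ • (B - F) + ‖C - F‖⁻¹ • (C - F)) -
          (‖A - G‖⁻¹ • (A - G) + ‖B - G‖⁻¹ • (B - G) + ‖C - G‖⁻¹ • (C - G)) := by abel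
      rw [this, hgF, hgG, sub_zero]
    rw [hX, inner_zero_left]
  have heA : ⟪‖A - F‖⁻¹ • (A - F) - ‖A - G‖⁻¹ • (A - G), F - G⟫ = 0 := by
    linarith [hzA.1, hzB.1, hzC.1]
  have heB : ⟪‖B - F‖⁻¹ • (B - F) - ‖B - G‖⁻¹ • (B - G), F - G⟫ = 0 := by
    linarith [hzA.1, hzB.1, hzC.1]
  have heC : ⟪‖C - F‖⁻¹ • (C - F) - ‖C - G‖⁻¹ • (C - G), F - G⟫ = 0 := by
    linarith [hzA.1, hzB.1, hzC.1]
  obtain ⟨rA, hrA⟩ := hzA.2 heA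
  obtain ⟨rB, hrB⟩ := hzB.2 heB
  obtain ⟨rC, hrC⟩ := hzC.2 heC
  apply hncol
  rw [collinear_iff_exists_forall_eq_smul_vadd]
  refine ⟨F, G - F, ?_⟩
  intro p hp
  simp only [Set.mem_insert_iff, Set.mem_singleton_iff] at hp
  rcases hp with rfl | rfl | rfl
  · exact ⟨rA, by rw [hrA]; rfl⟩
  · exact ⟨rB, by rw [hrB]; rfl⟩
  · exact ⟨rC, by rw [hrC]; rfl⟩

/-- If all angles of a triangle `ABC` are strictly less than `120°`, then there
exists a unique point `F` inside the triangle with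
`∠AFB = ∠BFC = ∠CFA = 120°` (the Fermat point). -/
theorem stmt4 (A B C : Pt) (hncol : ¬ Collinear ℝ ({A, B, C} : Set Pt))
    (hA : ∠ B A C < 2 * π / 3) (hB : ∠ A B C < 2 * π / 3)
    (hC : ∠ B C A < 2 * π / 3) :
    ∃! F : Pt, F ∈ interior (convexHull ℝ ({A, B, C} : Set Pt)) ∧
      ∠ A F B = 2 * π / 3 ∧ ∠ B F C = 2 * π / 3 ∧ ∠ C F A = 2 * π / 3 := by
  have hAB : A ≠ B := ne₁₂_of_not_collinear hncol
  have hAC : A ≠ C := ne₁₃_of_not_collinear hncol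
  have hBC : B ≠ C := ne₂₃_of_not_collinear hncol
  obtain ⟨F, hFmin⟩ := fermat_exists_min A B C
  -- F is not a vertex
  have hAF : A ≠ F := by
    obtain ⟨p, hp⟩ := fermat_vertex_decrease A B C hAB.symm hAC.symm hA
    intro h
    have h1 := hFmin p
    rw [← h] at h1
    simp only [dist_self] at h1
    linarith
  have hBF : B ≠ F := by
    obtain ⟨p, hp⟩ := fermat_vertex_decrease B A C hAB hBC.symm hB
    intro h
    have h1 := hFmin p
    rw [← h] at h1
    simp only [dist_self] at h1
    linarith
  have hCF : C ≠ F := by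
    obtain ⟨p, hp⟩ := fermat_vertex_decrease C B A hBC hAC hC
    intro h
    have h1 := hFmin p
    rw [← h] at h1
    simp only [dist_self] at h1
    linarith
  have hg := fermat_grad_zero A B C F hAF hBF hCF hFmin
  have hxF : 0 < ‖A - F‖ := by simpa [sub_eq_zero] using hAF
  have hyF : 0 < ‖B - F‖ := by simpa [sub_eq_zero] using hBF
  have hzF : 0 < ‖C - F‖ := by simpa [sub_eq_zero] using hCF
  have hnu : ‖‖A - F‖⁻¹ • (A - F)‖ = 1 := by
    rw [norm_smul, norm_inv, norm_norm, inv_mul_cancel₀ (ne_of_gt hxF)]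
  have hnv : ‖‖B - F‖⁻¹ • (B - F)‖ = 1 := by
    rw [norm_smul, norm_inv, norm_norm, inv_mul_cancel₀ (ne_of_gt hyF)]
  have hnw : ‖‖C - F‖⁻¹ • (C - F)‖ = 1 := by
    rw [norm_smul, norm_inv, norm_norm, inv_mul_cancel₀ (ne_of_gt hzF)]
  obtain ⟨huv, hvw, hwu⟩ := fermat_unit_sum_zero hnu hnv hnw hg
  have hang1 : ∠ A F B = 2 * π / 3 :=
    fermat_angle_eq_of_cos A F B ((fermat_cos_angle A F B hAF hBF).trans huv)
  have hang2 : ∠ B F C = 2 * π / 3 :=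
    fermat_angle_eq_of_cos B F C ((fermat_cos_angle B F C hBF hCF).trans hvw)
  have hang3 : ∠ C F A = 2 * π / 3 :=
    fermat_angle_eq_of_cos C F A ((fermat_cos_angle C F A hCF hAF).trans hwu)
  have hint := fermat_mem_interior A B C F hncol hAF hBF hCF hg
  refine ⟨F, ⟨hint, hang1, hang2, hang3⟩, ?_⟩
  rintro G ⟨hGint, hg1, hg2, hg3⟩
  have hpi : (π : ℝ) ≠ 0 := ne_of_gt Real.pi_pos
  have hAG : A ≠ G := by
    intro h
    rw [← h, EuclideanGeometry.angle_self_left] at hg1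
    have : π = 0 := by linarith
    exact hpi this
  have hBG : B ≠ G := by
    intro h
    rw [← h, EuclideanGeometry.angle_self_right] at hg1
    have : π = 0 := by linarith
    exact hpi this
  have hCG : C ≠ G := by
    intro h
    rw [← h, EuclideanGeometry.angle_self_right] at hg2
    have : π = 0 := by linarith
    exact hpi this
  have hxG : 0 < ‖A - G‖ := by simpa [sub_eq_zero] using hAG
  have hyG : 0 < ‖B - G‖ := by simpa [sub_eq_zero] using hBG
  have hzG : 0 < ‖C - G‖ := by simpa [sub_eq_zero] using hCG
  have hnuG : ‖‖A - G‖⁻¹ • (A - G)‖ = 1 := by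
    rw [norm_smul, norm_inv, norm_norm, inv_mul_cancel₀ (ne_of_gt hxG)]
  have hnvG : ‖‖B - G‖⁻¹ • (B - G)‖ = 1 := by
    rw [norm_smul, norm_inv, norm_norm, inv_mul_cancel₀ (ne_of_gt hyG)]
  have hnwG : ‖‖C - G‖⁻¹ • (C - G)‖ = 1 := by
    rw [norm_smul, norm_inv, norm_norm, inv_mul_cancel₀ (ne_of_gt hzG)]
  have huvG : ⟪‖A - G‖⁻¹ • (A - G), ‖B - G‖⁻¹ • (B - G)⟫ = -(1/2) := by
    rw [← fermat_cos_angle A G B hAG hBG, hg1, fermat_cos_two_pi_div_three]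
  have hvwG : ⟪‖B - G‖⁻¹ • (B - G), ‖C - G‖⁻¹ • (C - G)⟫ = -(1/2) := by
    rw [← fermat_cos_angle B G C hBG hCG, hg2, fermat_cos_two_pi_div_three]
  have hwuG : ⟪‖C - G‖⁻¹ • (C - G), ‖A - G‖⁻¹ • (A - G)⟫ = -(1/2) := by
    rw [← fermat_cos_angle C G A hCG hAG, hg3, fermat_cos_two_pi_div_three]
  have hgG := fermat_unit_sum_zero' hnuG hnvG hnwG huvG hvwG hwuG
  exact fermat_grad_unique A B C G F hncol hAG hBG hCG hAF hBF hCF hgG hg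
end

section
/- Let ABC be a triangle with ∠ACB ≥ 120°. Then C minimizes the function Q ↦ |AQ| + |BQ| + |CQ| over all points Q in the plane. -/
open EuclideanGeometry Real RealInnerProductSpace

/-- If the angle of triangle `ABC` at `C` is at least `120°`, then `C`
minimizes `Q ↦ |AQ| + |BQ| + |CQ|` over the plane. -/
theorem stmt6 (A B C : Pt) (hncol : ¬ Collinear ℝ ({A, B, C} : Set Pt))
    (hC : 2 * π / 3 ≤ ∠ A C B) :
    ∀ Q : Pt, dist A C + dist B C + dist C C ≤ dist A Q + dist B Q + dist C Q := by
  intro Q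
  have hA : A ≠ C := by
    rintro rfl
    exact hncol ((collinear_pair ℝ A B).subset (by intro p hp; simp at hp ⊢; tauto))
  have hB : B ≠ C := by
    rintro rfl
    exact hncol ((collinear_pair ℝ A B).subset (by intro p hp; simp at hp ⊢; tauto))
  set x := A - C with hxdef
  set y := B - C with hydef
  have hx0 : x ≠ 0 := sub_ne_zero.mpr hA
  have hy0 : y ≠ 0 := sub_ne_zero.mpr hB
  have hnx : (0:ℝ) < ‖x‖ := norm_pos_iff.mpr hx0
  have hny : (0:ℝ) < ‖y‖ := norm_pos_iff.mpr hy0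
  set u := ‖x‖⁻¹ • x with hudef
  set v := ‖y‖⁻¹ • y with hvdef
  have hnu : ‖u‖ = 1 := norm_smul_inv_norm hx0
  have hnv : ‖v‖ = 1 := norm_smul_inv_norm hy0
  have hxu : ⟪x, u⟫ = ‖x‖ := by
    rw [hudef, real_inner_smul_right, real_inner_self_eq_norm_mul_norm]
    field_simp
  have hyv : ⟪y, v⟫ = ‖y‖ := by
    rw [hvdef, real_inner_smul_right, real_inner_self_eq_norm_mul_norm]
    field_simp
  -- the angle at C
  have hangle : ∠ A C B = InnerProductGeometry.angle x y := rfl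
  have hcos : Real.cos (∠ A C B) ≤ -(1/2) := by
    have h1 : ∠ A C B ≤ π := EuclideanGeometry.angle_le_pi _ _ _
    have h2 : (0:ℝ) ≤ 2 * π / 3 := by positivity
    have h3 := Real.cos_le_cos_of_nonneg_of_le_pi h2 h1 hC
    have hc23 : Real.cos (2 * π / 3) = -(1/2) := by
      have h4 : 2 * π / 3 = π - π / 3 := by ring
      rw [h4, Real.cos_pi_sub, Real.cos_pi_div_three]
    rw [hc23] at h3
    exact h3
  have hinner : ⟪u, v⟫ ≤ -(1/2) := by
    have hca : Real.cos (InnerProductGeometry.angle x y) = ⟪x, y⟫ / (‖x‖ * ‖y‖) :=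
      InnerProductGeometry.cos_angle x y
    have huv : ⟪u, v⟫ = ⟪x, y⟫ / (‖x‖ * ‖y‖) := by
      rw [hudef, hvdef, real_inner_smul_left, real_inner_smul_right]
      field_simp
    rw [huv, ← hca, ← hangle]
    exact hcos
  have hsum : ‖u + v‖ ≤ 1 := by
    have hsq : ‖u + v‖ * ‖u + v‖ = ‖u‖ * ‖u‖ + 2 * ⟪u, v⟫ + ‖v‖ * ‖v‖ :=
      norm_add_mul_self_real u v
    nlinarith [norm_nonneg (u + v)]
  -- bounds
  have h1 : ‖x‖ + ⟪C - Q, u⟫ ≤ dist A Q := by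
    have heq : A - Q = x + (C - Q) := by rw [hxdef]; abel
    have key : ⟪x + (C - Q), u⟫ ≤ ‖x + (C - Q)‖ * ‖u‖ := real_inner_le_norm _ _
    rw [inner_add_left, hxu, hnu, mul_one, ← heq] at key
    rw [dist_eq_norm]
    exact key
  have h2 : ‖y‖ + ⟪C - Q, v⟫ ≤ dist B Q := by
    have heq : B - Q = y + (C - Q) := by rw [hydef]; abel
    have key : ⟪y + (C - Q), v⟫ ≤ ‖y + (C - Q)‖ * ‖v‖ := real_inner_le_norm _ _
    rw [inner_add_left, hyv, hnv, mul_one, ← heq] at key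
    rw [dist_eq_norm]
    exact key
  have h3 : -dist C Q ≤ ⟪C - Q, u + v⟫ := by
    have := abs_real_inner_le_norm (C - Q) (u + v)
    have hb : ‖C - Q‖ * ‖u + v‖ ≤ ‖C - Q‖ := by
      nlinarith [norm_nonneg (C - Q)]
    rw [dist_eq_norm]
    have := neg_abs_le ⟪C - Q, u + v⟫
    nlinarith [abs_real_inner_le_norm (C - Q) (u + v), neg_abs_le ⟪C - Q, u + v⟫]
  have hsplit : ⟪C - Q, u + v⟫ = ⟪C - Q, u⟫ + ⟪C - Q, v⟫ := inner_add_right _ _ _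
  have hdAC : dist A C = ‖x‖ := dist_eq_norm A C
  have hdBC : dist B C = ‖y‖ := dist_eq_norm B C
  rw [dist_self, hdAC, hdBC]
  linarith
end

section
/- Let A, B, C be points in counterclockwise order around a point Q, and suppose the three angles ∠AQB, ∠BQC, ∠CQA sum to 2π. If Q' is any point in the intersection of the open disks bounded by the circumcircle of A, B, Q and the circumcircle of B, C, Q, then ∠AQ'B > ∠AQB and ∠BQ'C > ∠BQC. -/
open EuclideanGeometry Real

noncomputable instance inst_s9 : Module.Oriented ℝ Pt (Fin 2) :=
  ⟨(EuclideanSpace.basisFun (Fin 2) ℝ).toBasis.orientation⟩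

instance inst_s9_2 : Fact (Module.finrank ℝ Pt = 2) := ⟨finrank_euclideanSpace_fin⟩

lemma key_angle_lt (A B Q Q' O : Pt) (ρ : ℝ)
    (hncol : ¬ Collinear ℝ ({A, B, Q} : Set Pt))
    (hOA : dist O A = ρ) (hOB : dist O B = ρ) (hOQ : dist O Q = ρ)
    (hQ' : dist Q' O < ρ)
    (hside : (affineSpan ℝ ({A, B} : Set Pt)).SSameSide Q Q') :
    ∠ A Q B < ∠ A Q' B := by
  set s : Sphere Pt := ⟨O, ρ⟩ with hs
  have hA : A ∈ s := by
    rw [EuclideanGeometry.mem_sphere, dist_comm]; exact hOA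
  have hB : B ∈ s := by
    rw [EuclideanGeometry.mem_sphere, dist_comm]; exact hOB
  have hQ : Q ∈ s := by
    rw [EuclideanGeometry.mem_sphere, dist_comm]; exact hOQ
  have hAB : A ≠ B := ne₁₂_of_not_collinear hncol
  have hAQ : A ≠ Q := ne₁₃_of_not_collinear hncol
  have hBQ : B ≠ Q := ne₂₃_of_not_collinear hncol
  set sp := affineSpan ℝ ({A, B} : Set Pt) with hspdef
  have hAsp : A ∈ sp := left_mem_affineSpan_pair ℝ A B
  have hBsp : B ∈ sp := right_mem_affineSpan_pair ℝ A B
  have hQ'sp : Q' ∉ sp := hside.right_notMem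
  have hQsp : Q ∉ sp := hside.left_notMem
  set P := s.secondInter A (Q' -ᵥ A) with hPdef
  have hsb : Sbtw ℝ A Q' P := Sphere.sbtw_secondInter hA hQ'
  have hPmem : P ∈ s := (Sphere.secondInter_mem _).2 hA
  have hAP : A ≠ P := hsb.left_ne_right
  have hPsp : P ∉ sp := by
    intro hP
    obtain ⟨t, -, ht⟩ := hsb.wbtw
    exact hQ'sp (ht ▸ AffineMap.lineMap_mem t hAsp hP)
  have hPB : P ≠ B := by rintro rfl; exact hPsp hBsp
  have hQ'P : Q' ∈ affineSpan ℝ ({A, P} : Set Pt) :=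
    (hsb.wbtw.collinear).mem_affineSpan_of_mem_of_ne
      (by simp) (by simp) (by simp) hAP
  have hncolAQ'B : ¬ Collinear ℝ ({A, Q', B} : Set Pt) := by
    intro h
    exact hQ'sp (h.mem_affineSpan_of_mem_of_ne (by simp) (by simp) (by simp) hAB)
  have hncolAQB : ¬ Collinear ℝ ({A, Q, B} : Set Pt) := by
    rwa [Set.pair_comm Q B]
  -- same-side facts
  have hssQ'P : sp.SSameSide Q' P := ⟨hsb.wbtw.wSameSide₂₃ hAsp, hQ'sp, hPsp⟩
  have hsgn1 : (∡ A Q' B).sign = (∡ A Q B).sign := hside.oangle_sign_eq hAsp hBsp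
  have hsgn2 : (∡ A P B).sign = (∡ A Q' B).sign := hssQ'P.oangle_sign_eq hAsp hBsp
  have hsgnQ : (∡ A Q B).sign ≠ 0 := by
    rw [Ne, oangle_sign_eq_zero_iff_collinear]; exact hncolAQB
  have h2 : (2 : ℤ) • ∡ A Q B = (2 : ℤ) • ∡ A P B :=
    Sphere.two_zsmul_oangle_eq hA hQ hPmem hB hAQ.symm hBQ.symm hAP.symm hPB
  have hoeq : ∡ A Q B = ∡ A P B := by
    rcases Real.Angle.two_zsmul_eq_iff.1 h2 with h | h
    · exact h
    · exfalso
      have : (∡ A Q B).sign = -(∡ A Q B).sign := by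
        conv_lhs => rw [h]
        rw [Real.Angle.sign_add_pi, hsgn2, hsgn1]
      have h0 : (∡ A Q B).sign = 0 := by
        rcases hsg : (∡ A Q B).sign <;> rw [hsg] at this <;> simp_all
      exact hsgnQ h0
  -- unoriented angle equality
  have hQ'A : Q' ≠ A := fun h => hQ'sp (h ▸ hAsp)
  have hQ'B : Q' ≠ B := fun h => hQ'sp (h ▸ hBsp)
  have hangeq : ∠ A Q B = ∠ A P B := by
    rw [angle_eq_abs_oangle_toReal hAQ hBQ,
      angle_eq_abs_oangle_toReal hAP hPB.symm, hoeq]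
  -- geometry of the triangle
  have hpi : ∠ A Q' P = π := hsb.angle₁₂₃_eq_pi
  have hext : ∠ B Q' A + ∠ B Q' P = π := angle_add_angle_eq_pi_of_angle_eq_pi B hpi
  have htri : ∠ Q' P B + ∠ P B Q' + ∠ B Q' P = π :=
    angle_add_angle_add_angle_eq_pi B hsb.ne_right.symm
  have hray : ∠ B P Q' = ∠ B P A :=
    angle_eq_angle_of_angle_eq_pi B (by rwa [angle_comm] at hpi)
  have hPBQ'pos : 0 < ∠ P B Q' := by
    rcases (angle_nonneg P B Q').lt_or_eq with h | h
    · exact h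
    exfalso
    have h0 : ∠ P B Q' = 0 := h.symm
    have hcol : Collinear ℝ ({B, P, Q'} : Set Pt) := by
      rcases angle_eq_zero_iff_ne_and_wbtw.1 h0 with ⟨-, hw⟩ | ⟨-, hw⟩
      · exact hw.collinear
      · have hcl := hw.collinear
        rwa [Set.pair_comm Q' P] at hcl
    have hBmem : B ∈ affineSpan ℝ ({P, Q'} : Set Pt) :=
      hcol.mem_affineSpan_of_mem_of_ne (by simp) (by simp) (by simp) hsb.ne_right.symm
    have hPline : P ∈ affineSpan ℝ ({A, P} : Set Pt) := right_mem_affineSpan_pair ℝ A P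
    have hsple : affineSpan ℝ ({P, Q'} : Set Pt) ≤ affineSpan ℝ ({A, P} : Set Pt) := by
      apply affineSpan_le.2
      rintro x (rfl | rfl)
      · exact hPline
      · exact hQ'P
    have : Collinear ℝ ({Q', B, A, P} : Set Pt) :=
      collinear_insert_insert_of_mem_affineSpan_pair hQ'P (hsple hBmem)
    refine hncolAQ'B (this.subset ?_)
    intro x hx
    simp only [Set.mem_insert_iff, Set.mem_singleton_iff] at hx ⊢
    rcases hx with rfl | rfl | rfl
    · exact Or.inr (Or.inr (Or.inl rfl))
    · exact Or.inl rfl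
    · exact Or.inr (Or.inl rfl)
  have hfin : ∠ A Q' B = ∠ A Q B + ∠ P B Q' := by
    have h1 : ∠ A Q' B = ∠ B Q' A := angle_comm _ _ _
    have h2' : ∠ Q' P B = ∠ B P Q' := angle_comm _ _ _
    have h3 : ∠ A P B = ∠ B P A := angle_comm _ _ _
    linarith [hangeq, hext, htri, hray]
  linarith [hfin, hPBQ'pos]

/-- If `A`, `B`, `C` are in counterclockwise order around `Q` (the three angles
at `Q` sum to `2π`) and `Q'` lies inside both the circumcircle of `A, B, Q`
and the circumcircle of `B, C, Q`, on the same side of line `AB` as `Q` and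
the same side of line `BC` as `Q`, then `∠AQ'B > ∠AQB` and `∠BQ'C > ∠BQC`. -/
theorem stmt9 (A B C Q Q' O₁ O₂ : Pt) (ρ₁ ρ₂ : ℝ)
    (hncol₁ : ¬ Collinear ℝ ({A, B, Q} : Set Pt))
    (hncol₂ : ¬ Collinear ℝ ({B, C, Q} : Set Pt))
    (hsum : ∠ A Q B + ∠ B Q C + ∠ C Q A = 2 * π)
    (hO₁A : dist O₁ A = ρ₁) (hO₁B : dist O₁ B = ρ₁) (hO₁Q : dist O₁ Q = ρ₁)
    (hO₂B : dist O₂ B = ρ₂) (hO₂C : dist O₂ C = ρ₂) (hO₂Q : dist O₂ Q = ρ₂)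
    (hQ'1 : dist Q' O₁ < ρ₁) (hQ'2 : dist Q' O₂ < ρ₂)
    (hside₁ : (affineSpan ℝ ({A, B} : Set Pt)).SSameSide Q Q')
    (hside₂ : (affineSpan ℝ ({B, C} : Set Pt)).SSameSide Q Q') :
    ∠ A Q B < ∠ A Q' B ∧ ∠ B Q C < ∠ B Q' C :=
  ⟨key_angle_lt A B Q Q' O₁ ρ₁ hncol₁ hO₁A hO₁B hO₁Q hQ'1 hside₁,
   key_angle_lt B C Q Q' O₂ ρ₂ hncol₂ hO₂B hO₂C hO₂Q hQ'2 hside₂⟩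
end

section
/- Let P, A, B, C be points in the plane, Z the closed disk of radius r > 0 centered at P, and suppose P* maximizes Q ↦ min(∠AQB, ∠BQC, ∠CQA) over Z. If exactly two of the three angles at P* attain the minimum (say ∠AP*B = ∠BP*C < ∠CP*A, with A, B, C in counterclockwise order around P*), then |PP*| = r, i.e., P* lies on the boundary circle of Z. -/
open EuclideanGeometry Real

open AffineMap in
/-- Moving a vertex strictly toward one endpoint strictly increases the angle, provided the
three points are not collinear. -/
lemma angle_lt_lineMap (A Q B : Pt) (hQA : Q ≠ A) (hQB : Q ≠ B)
    (h0 : ∠ A Q B ≠ 0) (hπ : ∠ A Q B ≠ π) {t : ℝ} (ht0 : 0 < t) (ht1 : t < 1) :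
    ∠ A Q B < ∠ A (lineMap Q B t) B := by
  set Q' := lineMap Q B t with hQ'
  have hsb : Sbtw ℝ Q Q' B := sbtw_lineMap_iff.2 ⟨hQB, ht0, ht1⟩
  have hQ'A : Q' ≠ A := by
    rintro rfl
    exact h0 (hsb.wbtw.angle₂₁₃_eq_zero_of_ne (Ne.symm hQA))
  have hQQ' : Q ≠ Q' := hsb.ne_left.symm
  have hAQQ' : ∠ A Q Q' = ∠ A Q B := by
    unfold EuclideanGeometry.angle
    rw [hQ', lineMap_apply, vadd_vsub]
    exact InnerProductGeometry.angle_smul_right_of_pos _ _ ht0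
  have htri : ∠ A Q Q' + ∠ Q Q' A + ∠ Q' A Q = π :=
    EuclideanGeometry.angle_add_angle_add_angle_eq_pi Q' hQA
  have hsplit : ∠ A Q' Q + ∠ A Q' B = π :=
    EuclideanGeometry.angle_add_angle_eq_pi_of_angle_eq_pi A hsb.angle₁₂₃_eq_pi
  have hcomm : ∠ A Q' Q = ∠ Q Q' A := EuclideanGeometry.angle_comm _ _ _
  have hpos : 0 < ∠ Q' A Q := by
    rcases (EuclideanGeometry.angle_nonneg Q' A Q).lt_or_eq with h | h
    · exact h
    exfalso
    have hcol1 : Collinear ℝ ({Q', A, Q} : Set Pt) :=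
      EuclideanGeometry.collinear_of_angle_eq_zero h.symm
    have hc3 : Collinear ℝ ({B, Q', Q} : Set Pt) := by
      refine hsb.wbtw.collinear.subset ?_
      intro x hx; simp at hx ⊢; tauto
    have hins : Collinear ℝ (insert B ({Q', A, Q} : Set Pt)) :=
      (hcol1.collinear_insert_iff_of_ne (by simp) (by simp) (Ne.symm hQQ')).2 hc3
    have hABQ : Collinear ℝ ({A, Q, B} : Set Pt) := by
      refine hins.subset ?_
      intro x hx; simp at hx ⊢; tauto
    rcases EuclideanGeometry.collinear_iff_eq_or_eq_or_angle_eq_zero_or_angle_eq_pi.1 hABQ with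
      h' | h' | h' | h'
    · exact hQA h'.symm
    · exact hQB h'.symm
    · exact h0 h'
    · exact hπ h'
  linarith [hAQQ', htri, hsplit, hcomm]

/-- If `P*` maximizes `Q ↦ min(∠AQB, ∠BQC, ∠CQA)` over the closed disk `Z` of
radius `r` about `P`, with `A`, `B`, `C` in counterclockwise order around `P*`
(the three angles sum to `2π`), and exactly two of the three angles at `P*`
attain the minimum (`∠AP*B = ∠BP*C < ∠CP*A`), then `P*` lies on the boundary
circle of `Z`. -/
theorem stmt10 (A B C P Pstar : Pt) (r : ℝ) (hr : 0 < r)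
    (hout : ∀ X ∈ Metric.closedBall P r, X ≠ A ∧ X ≠ B ∧ X ≠ C)
    (hmem : Pstar ∈ Metric.closedBall P r)
    (hmax : ∀ Q ∈ Metric.closedBall P r,
      min (∠ A Q B) (min (∠ B Q C) (∠ C Q A)) ≤
        min (∠ A Pstar B) (min (∠ B Pstar C) (∠ C Pstar A)))
    (hccw : ∠ A Pstar B + ∠ B Pstar C + ∠ C Pstar A = 2 * π)
    (heq : ∠ A Pstar B = ∠ B Pstar C)
    (hlt : ∠ B Pstar C < ∠ C Pstar A) :
    dist P Pstar = r := by
  by_contra hne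
  obtain ⟨hA, hB, hC⟩ := hout Pstar hmem
  have hmem' : dist Pstar P ≤ r := Metric.mem_closedBall.1 hmem
  have hdlt : dist Pstar P < r := by
    rcases lt_or_eq_of_le hmem' with h | h
    · exact h
    · exact absurd (by rw [dist_comm]; exact h) hne
  -- basic angle facts
  have hcle : ∠ C Pstar A ≤ π := EuclideanGeometry.angle_le_pi _ _ _
  have ha_lt_pi : ∠ A Pstar B < π := lt_of_lt_of_le (heq ▸ hlt) hcle
  have ha_ge : π / 2 ≤ ∠ A Pstar B := by
    rw [heq] at hccw ⊢; linarith
  have ha0 : ∠ A Pstar B ≠ 0 := by have := Real.pi_pos; linarith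
  have haπ : ∠ A Pstar B ≠ π := ne_of_lt ha_lt_pi
  have hCB0 : ∠ C Pstar B ≠ 0 := by
    rw [EuclideanGeometry.angle_comm, ← heq]; exact ha0
  have hCBπ : ∠ C Pstar B ≠ π := by
    rw [EuclideanGeometry.angle_comm, ← heq]; exact haπ
  -- continuity of the large angle
  have hcont : ContinuousAt (fun Q : Pt => ∠ C Q A) Pstar := by
    have h := EuclideanGeometry.continuousAt_angle (x := ((C, Pstar, A) : Pt × Pt × Pt))
      (Ne.symm hC) (Ne.symm hA)
    have hg : ContinuousAt (fun Q : Pt => ((C, Q, A) : Pt × Pt × Pt)) Pstar :=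
      (continuous_const.prodMk (continuous_id.prodMk continuous_const)).continuousAt
    have h2 := ContinuousAt.comp (f := fun Q : Pt => ((C, Q, A) : Pt × Pt × Pt)) (x := Pstar) h hg
    exact h2
  have hac : ∠ A Pstar B < ∠ C Pstar A := heq ▸ hlt
  have hev : ∀ᶠ Q in nhds Pstar, ∠ A Pstar B < ∠ C Q A :=
    hcont.eventually (eventually_gt_nhds hac)
  obtain ⟨δ, hδpos, hδ⟩ := Metric.eventually_nhds_iff.1 hev
  -- choose the step size
  set D := dist Pstar B with hD
  have hDpos : 0 < D := dist_pos.2 hB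
  set s := r - dist Pstar P with hs
  have hspos : 0 < s := by simp [hs]; linarith
  set t : ℝ := min (1 / 2) (min (δ / (2 * D)) (s / (2 * D))) with ht
  have ht0 : 0 < t := by
    simp only [ht, lt_min_iff]
    refine ⟨by norm_num, div_pos hδpos (by linarith), div_pos hspos (by linarith)⟩
  have ht1 : t < 1 := lt_of_le_of_lt (min_le_left _ _) (by norm_num)
  set Q' : Pt := AffineMap.lineMap Pstar B t with hQ'
  have hdQ' : dist Q' Pstar = t * D := by
    rw [hQ', dist_lineMap_left, Real.norm_eq_abs, abs_of_pos ht0]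
  have htδ : t * D ≤ δ / 2 := by
    have h1 : t ≤ δ / (2 * D) := le_trans (min_le_right _ _) (min_le_left _ _)
    calc t * D ≤ δ / (2 * D) * D := by nlinarith
    _ = δ / 2 := by field_simp
  have hts : t * D ≤ s / 2 := by
    have h1 : t ≤ s / (2 * D) := le_trans (min_le_right _ _) (min_le_right _ _)
    calc t * D ≤ s / (2 * D) * D := by nlinarith
    _ = s / 2 := by field_simp
  have hQ'mem : Q' ∈ Metric.closedBall P r := by
    rw [Metric.mem_closedBall]
    calc dist Q' P ≤ dist Q' Pstar + dist Pstar P := dist_triangle _ _ _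
    _ ≤ s / 2 + dist Pstar P := by rw [hdQ']; linarith
    _ ≤ r := by simp [hs] at hspos ⊢; linarith
  have hQ'near : dist Q' Pstar < δ := by rw [hdQ']; linarith
  -- the three angles at Q' all exceed the old minimum
  have h1 : ∠ A Pstar B < ∠ A Q' B :=
    angle_lt_lineMap A Pstar B hA hB ha0 haπ ht0 ht1
  have h2 : ∠ A Pstar B < ∠ B Q' C := by
    have h := angle_lt_lineMap C Pstar B hC hB hCB0 hCBπ ht0 ht1
    rw [EuclideanGeometry.angle_comm C Pstar B, ← heq] at h
    rw [EuclideanGeometry.angle_comm B Q' C]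
    exact h
  have h3 : ∠ A Pstar B < ∠ C Q' A := hδ hQ'near
  have hminPstar : min (∠ A Pstar B) (min (∠ B Pstar C) (∠ C Pstar A)) = ∠ A Pstar B := by
    rw [min_eq_left hlt.le, ← heq, min_self]
  have := hmax Q' hQ'mem
  rw [hminPstar] at this
  have : ∠ A Pstar B < min (∠ A Q' B) (min (∠ B Q' C) (∠ C Q' A)) :=
    lt_min h1 (lt_min h2 h3)
  linarith
end
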